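/- arXiv:1912.07422 — 6 statements merged into one kernel-verified Lean document; each statement's English description precedes it below -/
import Mathlib

section
/- Let ρ > 0 and let φ : ℕ → (0,∞) satisfy lim_{N→∞} (log N)/φ(N) = 0. Then for every real x < 0, lim_{N→∞} P((H_N − E(H_N))/φ(N) ≤ x) = 0, and for every real x > 0, lim_{N→∞} P((H_N − E(H_N))/φ(N) ≤ x) = 1. In particular, the centered and normalized height converges in distribution to the degenerate distribution at 0, so the central limit theorem fails for H_N. -/
open Finset Filter Real Topology

/-- `r_{ρ,n}(i) = ρ^{-i} * C(n-1, i)^{-1}`. -/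
noncomputable def rfun (ρ : ℝ) (n i : ℕ) : ℝ := (ρ ^ i * (Nat.choose (n - 1) i : ℝ))⁻¹

/-- `P(H_N ≥ k)` for `k = 1,…,N`, and `0` for `k > N`. -/
noncomputable def tailP (ρ : ℝ) (N k : ℕ) : ℝ :=
  if k ≤ N then (∑ i ∈ Finset.range k, rfun ρ N i)⁻¹ else 0

/-- `P(H_N = k) = P(H_N ≥ k) − P(H_N ≥ k+1)`. -/
noncomputable def pmfP (ρ : ℝ) (N k : ℕ) : ℝ := tailP ρ N k - tailP ρ N (k + 1)

/-- `E(H_N) = ∑_{k=1}^N P(H_N ≥ k)`. -/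
noncomputable def EH (ρ : ℝ) (N : ℕ) : ℝ := ∑ k ∈ Finset.Icc 1 N, tailP ρ N k

/-- `Var(H_N) = ∑_{k=1}^N (k − E(H_N))² P(H_N = k)`. -/
noncomputable def VarH (ρ : ℝ) (N : ℕ) : ℝ :=
  ∑ k ∈ Finset.Icc 1 N, ((k : ℝ) - EH ρ N) ^ 2 * pmfP ρ N k

/-- `P(H_N ≤ t)` for a real threshold `t`. -/
noncomputable def cdfP (ρ : ℝ) (N : ℕ) (t : ℝ) : ℝ :=
  ∑ k ∈ (Finset.Icc 1 N).filter (fun k : ℕ => (k : ℝ) ≤ t), pmfP ρ N k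

/-! ### Auxiliary lemmas -/

lemma rfun_zero (ρ : ℝ) (N : ℕ) : rfun ρ N 0 = 1 := by simp [rfun]

lemma rfun_nonneg {ρ : ℝ} (hρ : 0 < ρ) (N i : ℕ) : 0 ≤ rfun ρ N i := by
  unfold rfun; positivity

lemma rfun_pos {ρ : ℝ} (hρ : 0 < ρ) {N i : ℕ} (hi : i ≤ N - 1) : 0 < rfun ρ N i := by
  unfold rfun
  have := Nat.choose_pos hi
  positivity

lemma rfun_ratio {ρ : ℝ} (hρ : 0 < ρ) {N i : ℕ} (hi : i + 1 ≤ N - 1) :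
    ρ * (((N:ℝ) - 1) - i) * rfun ρ N (i+1) = (i+1) * rfun ρ N i := by
  have hN2 : 2 ≤ N := by omega
  have hcast : ((N:ℝ) - 1) - i = ((N - 1 - i : ℕ) : ℝ) := by
    push_cast [Nat.cast_sub (by omega : 1 ≤ N), Nat.cast_sub (by omega : i ≤ N - 1)]
    ring
  have hch := Nat.choose_succ_right_eq (N - 1) i
  have h1 : (0:ℝ) < (N - 1).choose i := by exact_mod_cast Nat.choose_pos (by omega)
  have h2 : (0:ℝ) < (N - 1).choose (i+1) := by exact_mod_cast Nat.choose_pos hi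
  have hchR : ((N - 1).choose (i+1) : ℝ) * (i+1) = ((N - 1).choose i : ℝ) * ((N - 1 - i : ℕ) : ℝ) := by
    exact_mod_cast congrArg (Nat.cast : ℕ → ℝ) hch
  rw [hcast]
  unfold rfun
  rw [pow_succ]
  field_simp
  linear_combination (-1) * hchR

lemma step_up {ρ c : ℝ} (hρ : 0 < ρ) (hc : 0 ≤ c) {N i : ℕ} (hi : i + 1 ≤ N - 1)
    (h : c * (ρ * (((N:ℝ) - 1) - i)) ≤ i + 1) : c * rfun ρ N i ≤ rfun ρ N (i+1) := by
  have hpos : (0:ℝ) < ((N:ℝ) - 1) - i := by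
    have : (i:ℝ) + 1 ≤ (N:ℝ) - 1 := by
      have h2 : 2 ≤ N := by omega
      have := (Nat.cast_le (α := ℝ)).2 hi
      push_cast [Nat.cast_sub (by omega : 1 ≤ N)] at this ⊢; linarith
    linarith
  have hr := rfun_ratio hρ hi
  have hri : 0 < rfun ρ N i := rfun_pos hρ (by omega)
  have hri1 : 0 < rfun ρ N (i+1) := rfun_pos hρ hi
  nlinarith [mul_le_mul_of_nonneg_right h (le_of_lt hri)]

lemma step_down {ρ c : ℝ} (hρ : 0 < ρ) {N i : ℕ} (hi : i + 1 ≤ N - 1)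
    (h : (i:ℝ) + 1 ≤ c * (ρ * (((N:ℝ) - 1) - i))) : rfun ρ N (i+1) ≤ c * rfun ρ N i := by
  have hpos : (0:ℝ) < ((N:ℝ) - 1) - i := by
    have : (i:ℝ) + 1 ≤ (N:ℝ) - 1 := by
      have h2 : 2 ≤ N := by omega
      have := (Nat.cast_le (α := ℝ)).2 hi
      push_cast [Nat.cast_sub (by omega : 1 ≤ N)] at this ⊢; linarith
    linarith
  have hr := rfun_ratio hρ hi
  have hri : 0 < rfun ρ N i := rfun_pos hρ (by omega)
  have hri1 : 0 < rfun ρ N (i+1) := rfun_pos hρ hi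
  nlinarith [mul_le_mul_of_nonneg_right h (le_of_lt hri), mul_pos hρ hpos]

lemma chain_lower (f : ℕ → ℝ) (c : ℝ) (hc : 0 ≤ c) {a b : ℕ} (hab : a ≤ b)
    (h : ∀ j, a ≤ j → j < b → c * f j ≤ f (j+1)) :
    c ^ (b - a) * f a ≤ f b := by
  induction b, hab using Nat.le_induction with
  | base => simp
  | succ n hn ih =>
    have h1 : c ^ (n - a) * f a ≤ f n := ih (fun j hj hj' => h j hj (by omega))
    have h2 : c * f n ≤ f (n+1) := h n hn (by omega)
    have h3 : c * (c ^ (n - a) * f a) ≤ c * f n := mul_le_mul_of_nonneg_left h1 hc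
    calc c ^ (n + 1 - a) * f a = c * (c ^ (n - a) * f a) := by
          rw [show n + 1 - a = (n - a) + 1 by omega, pow_succ]; ring
      _ ≤ f (n+1) := le_trans h3 h2

lemma chain_upper (f : ℕ → ℝ) (c : ℝ) (hc : 0 ≤ c) {a b : ℕ} (hab : a ≤ b)
    (h : ∀ j, a ≤ j → j < b → f (j+1) ≤ c * f j) :
    f b ≤ c ^ (b - a) * f a := by
  induction b, hab using Nat.le_induction with
  | base => simp
  | succ n hn ih =>
    have h1 : f n ≤ c ^ (n - a) * f a := ih (fun j hj hj' => h j hj (by omega))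
    have h2 : f (n+1) ≤ c * f n := h n hn (by omega)
    calc f (n+1) ≤ c * f n := h2
      _ ≤ c * (c ^ (n - a) * f a) := mul_le_mul_of_nonneg_left h1 hc
      _ = c ^ (n + 1 - a) * f a := by
          rw [show n + 1 - a = (n - a) + 1 by omega, pow_succ]; ring

lemma geom_sum_le_inv {c : ℝ} (hc : 0 ≤ c) (hc1 : c < 1) (n : ℕ) :
    ∑ j ∈ Finset.range n, c ^ j ≤ (1 - c)⁻¹ := by
  have h1 : 0 < 1 - c := by linarith
  have h2 : (∑ j ∈ Finset.range n, c ^ j) * (c - 1) = c ^ n - 1 := geom_sum_mul c n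
  have h3 : (1 - c) * (1 - c)⁻¹ = 1 := mul_inv_cancel₀ (ne_of_gt h1)
  nlinarith [pow_nonneg hc n, h2, h3]

lemma tailP_one {ρ : ℝ} (N : ℕ) (hN : 1 ≤ N) : tailP ρ N 1 = 1 := by
  simp [tailP, hN, rfun_zero]

lemma sum_S_nonneg {ρ : ℝ} (hρ : 0 < ρ) (N k : ℕ) :
    0 ≤ ∑ i ∈ Finset.range k, rfun ρ N i :=
  Finset.sum_nonneg fun i _ => rfun_nonneg hρ N i

lemma one_le_S {ρ : ℝ} (hρ : 0 < ρ) (N : ℕ) {k : ℕ} (hk : 1 ≤ k) :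
    1 ≤ ∑ i ∈ Finset.range k, rfun ρ N i := by
  have h0 : rfun ρ N 0 = 1 := rfun_zero ρ N
  calc (1:ℝ) = rfun ρ N 0 := h0.symm
    _ ≤ ∑ i ∈ Finset.range k, rfun ρ N i :=
      Finset.single_le_sum (fun i _ => rfun_nonneg hρ N i) (Finset.mem_range.2 hk)

lemma tailP_nonneg {ρ : ℝ} (hρ : 0 < ρ) (N k : ℕ) : 0 ≤ tailP ρ N k := by
  unfold tailP; split
  · exact inv_nonneg.2 (sum_S_nonneg hρ N k)
  · exact le_refl 0

lemma tailP_le_one {ρ : ℝ} (hρ : 0 < ρ) (N k : ℕ) : tailP ρ N k ≤ 1 := by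
  unfold tailP; split
  · rcases Nat.eq_zero_or_pos k with hk | hk
    · simp [hk]
    · exact inv_le_one_of_one_le₀ (one_le_S hρ N hk)
  · norm_num

lemma cdfP_eval {ρ : ℝ} (N : ℕ) (hN : 1 ≤ N) (t : ℝ) (ht : 1 ≤ t) :
    cdfP ρ N t = 1 - tailP ρ N (min N ⌊t⌋₊ + 1) := by
  have hfil : (Finset.Icc 1 N).filter (fun k : ℕ => (k : ℝ) ≤ t)
      = Finset.Icc 1 (min N ⌊t⌋₊) := by
    ext k
    simp only [Finset.mem_filter, Finset.mem_Icc, le_min_iff]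
    constructor
    · rintro ⟨⟨h1, h2⟩, h3⟩
      exact ⟨h1, h2, Nat.le_floor h3⟩
    · rintro ⟨h1, h2, h3⟩
      exact ⟨⟨h1, h2⟩, (Nat.le_floor_iff (by linarith)).1 h3⟩
  rw [cdfP, hfil]
  set M := min N ⌊t⌋₊ with hM
  have : ∑ k ∈ Finset.Icc 1 M, pmfP ρ N k
      = ∑ j ∈ Finset.range M, (tailP ρ N (j+1) - tailP ρ N (j+2)) := by
    rw [show Finset.Icc 1 M = Finset.Ico 1 (M+1) by rw [Finset.Ico_add_one_right_eq_Icc],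
      Finset.sum_Ico_eq_sum_range]
    apply Finset.sum_congr rfl
    intro j _
    simp [pmfP]
    ring_nf
  rw [this, Finset.sum_range_sub' (fun j => tailP ρ N (j+1))]
  rw [tailP_one N hN]

lemma cdfP_of_lt_one {ρ : ℝ} (N : ℕ) (t : ℝ) (ht : t < 1) : cdfP ρ N t = 0 := by
  rw [cdfP]
  apply Finset.sum_eq_zero
  intro k hk
  simp only [Finset.mem_filter, Finset.mem_Icc] at hk
  exfalso
  have : (1:ℝ) ≤ (k:ℝ) := by exact_mod_cast hk.1.1
  linarith [hk.2]

/-- Constants depending only on `ρ`. -/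
noncomputable def Aρ (ρ : ℝ) : ℝ := 1 + 2/ρ + 8/ρ^2
noncomputable def cρ (ρ : ℝ) : ℝ := (1+ρ/2)⁻¹
noncomputable def Bρ (ρ : ℝ) : ℝ := (1+ρ/2)/ρ
noncomputable def c0ρ (ρ : ℝ) : ℝ := ρ/(8*(1+ρ/2))
noncomputable def B3ρ (ρ : ℝ) : ℝ :=
  Aρ ρ + Bρ ρ * ((1+ρ/2)/(ρ/2)) + (c0ρ ρ)⁻¹ * ((1+ρ/2)/(ρ/2))
lemma inv_le_of_one_le_mul {a y : ℝ} (ha : 0 < a) (hy : 0 ≤ y) (h : 1 ≤ a * y) : a⁻¹ ≤ y := by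
  calc a⁻¹ = a⁻¹ * 1 := by ring
    _ ≤ a⁻¹ * (a * y) := by gcongr
    _ = (a⁻¹ * a) * y := by ring
    _ = y := by rw [inv_mul_cancel₀ (ne_of_gt ha)]; ring

set_option maxHeartbeats 2000000 in
lemma bundle (ρ : ℝ) (hρ : 0 < ρ) (N : ℕ) (hN4 : 4 ≤ N)
    (hexp : (N:ℝ)^3 * ((1+ρ) * ((1+ρ/2)/(1+ρ))^N) ≤ 1)
    (hA : Aρ ρ ≤ (N:ℝ)/4) :
    ∃ K : ℕ, 1 ≤ K ∧ K ≤ N ∧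
      ((K:ℝ) - B3ρ ρ ≤ EH ρ N ∧ EH ρ N ≤ (K:ℝ) + B3ρ ρ) ∧
      (∀ k : ℕ, 1 ≤ k → k ≤ K →
        1 - (Aρ ρ / N + Bρ ρ * cρ ρ ^ (K - k)) ≤ tailP ρ N k) ∧
      (∀ k : ℕ, K < k → k ≤ N →
        tailP ρ N k ≤ (c0ρ ρ)⁻¹ * cρ ρ ^ (k - 1 - K)) := by
  classical
  have hN1 : (1:ℝ) ≤ (N:ℝ) := by exact_mod_cast (by omega : 1 ≤ N)
  have hNpos : (0:ℝ) < N := by linarith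
  have hδ : (0:ℝ) < ρ/2 := by positivity
  have hcval : cρ ρ = (1+ρ/2)⁻¹ := rfl
  have hcpos : 0 < cρ ρ := by rw [hcval]; positivity
  have hc1 : cρ ρ < 1 := by
    rw [hcval]
    rw [inv_lt_one_iff₀]
    right; linarith
  have hcinv : (1 - cρ ρ)⁻¹ = (1+ρ/2)/(ρ/2) := by
    rw [hcval]
    rw [show (1:ℝ) - (1+ρ/2)⁻¹ = (ρ/2)/(1+ρ/2) by field_simp; ring]
    rw [inv_div]
  have hApos : 0 < Aρ ρ := by rw [Aρ]; positivity
  have hBpos : 0 < Bρ ρ := by rw [Bρ]; positivity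
  have hc0pos : 0 < c0ρ ρ := by rw [c0ρ]; positivity
  have hAN : Aρ ρ / N ≤ 1/4 := by rw [div_le_iff₀ hNpos]; linarith
  have hANpos : 0 ≤ Aρ ρ / N := by positivity
  have hT : ∀ k, k ≤ N → tailP ρ N k = (∑ i ∈ Finset.range k, rfun ρ N i)⁻¹ :=
    fun k hk => if_pos hk
  have hrnn : ∀ i, 0 ≤ rfun ρ N i := rfun_nonneg hρ N
  -- the threshold index i1
  have hPN1 : (1+ρ/2) * (ρ * (((N:ℝ) - 1) - ((N-1:ℕ):ℝ))) ≤ ((N-1:ℕ):ℝ) + 1 := by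
    have e : ((N-1 : ℕ):ℝ) = (N:ℝ) - 1 := by
      push_cast [Nat.cast_sub (by omega : 1 ≤ N)]; ring
    rw [e]
    have e2 : (1+ρ/2) * (ρ * (((N:ℝ) - 1) - ((N:ℝ) - 1))) = 0 := by ring
    rw [e2]; linarith
  have hPex : ∃ i : ℕ, (1+ρ/2) * (ρ * (((N:ℝ) - 1) - (i:ℝ))) ≤ (i:ℝ) + 1 := ⟨N-1, hPN1⟩
  set i1 := Nat.find hPex with hi1def
  have hPi1 : (1+ρ/2) * (ρ * (((N:ℝ) - 1) - (i1:ℝ))) ≤ (i1:ℝ) + 1 := Nat.find_spec hPex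
  have hi1N : i1 ≤ N - 1 := Nat.find_min' hPex hPN1
  have hPup : ∀ i, i1 ≤ i → (1+ρ/2) * (ρ * (((N:ℝ) - 1) - (i:ℝ))) ≤ (i:ℝ) + 1 := by
    intro i hi
    induction i, hi using Nat.le_induction with
    | base => exact hPi1
    | succ n hn ih =>
      have h1 : (1+ρ/2) * (ρ * (((N:ℝ) - 1) - ((n+1:ℕ):ℝ))) ≤ (1+ρ/2) * (ρ * (((N:ℝ) - 1) - (n:ℝ))) := by
        have : (((n+1:ℕ)):ℝ) = (n:ℝ) + 1 := by push_cast; ring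
        rw [this]
        apply mul_le_mul_of_nonneg_left _ (by positivity)
        apply mul_le_mul_of_nonneg_left _ (le_of_lt hρ)
        linarith
      have : (((n+1:ℕ)):ℝ) = (n:ℝ) + 1 := by push_cast; ring
      rw [this] at h1 ⊢
      linarith
  have hPlt : ∀ i, i < i1 → (i:ℝ) + 1 < (1+ρ/2) * (ρ * (((N:ℝ) - 1) - (i:ℝ))) :=
    fun i hi => not_le.1 (Nat.find_min hPex hi)
  -- step inequalities
  have hup : ∀ j, i1 ≤ j → j + 1 ≤ N - 1 → (1+ρ/2) * rfun ρ N j ≤ rfun ρ N (j+1) :=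
    fun j hj hj2 => step_up hρ (by positivity) hj2 (hPup j hj)
  have hdn : ∀ j, j < i1 → j + 1 ≤ N - 1 → rfun ρ N (j+1) ≤ (1+ρ/2) * rfun ρ N j :=
    fun j hj hj2 => step_down hρ hj2 (le_of_lt (hPlt j hj))
  have hgeo : ∀ a b : ℕ, i1 ≤ a → a ≤ b → b ≤ N - 1 →
      (1+ρ/2) ^ (b - a) * rfun ρ N a ≤ rfun ρ N b := by
    intro a b ha hab hb
    exact chain_lower _ _ (by positivity) hab
      (fun j hj hj' => hup j (le_trans ha hj) (by omega))
  -- argmax bound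
  have hmax : ∃ m : ℕ, m ≤ N - 1 ∧ rfun ρ N m ≤ (N:ℝ) / (1+ρ)^(N-1) := by
    have hbin : ((1:ℝ)+ρ)^(N-1) = ∑ k ∈ Finset.range N, ρ^k * ((N-1).choose k : ℝ) := by
      have h := add_pow ρ 1 (N-1)
      rw [show N - 1 + 1 = N by omega] at h
      rw [add_comm 1 ρ, h]
      apply Finset.sum_congr rfl
      intro k _
      rw [one_pow]; ring
    obtain ⟨m, hm, hmm⟩ := Finset.exists_max_image (Finset.range N)
      (fun k => ρ^k * ((N-1).choose k : ℝ)) ⟨0, Finset.mem_range.2 (by omega)⟩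
    have hmN : m < N := Finset.mem_range.1 hm
    have hchpos : (0:ℝ) < ((N-1).choose m : ℝ) := by
      exact_mod_cast Nat.choose_pos (by omega : m ≤ N - 1)
    have htermpos : (0:ℝ) < ρ^m * ((N-1).choose m : ℝ) := by positivity
    have hsum : ((1:ℝ)+ρ)^(N-1) ≤ (N:ℝ) * (ρ^m * ((N-1).choose m : ℝ)) := by
      rw [hbin]
      calc ∑ k ∈ Finset.range N, ρ^k * ((N-1).choose k : ℝ)
          ≤ ∑ _k ∈ Finset.range N, ρ^m * ((N-1).choose m : ℝ) :=
            Finset.sum_le_sum (fun i hi => hmm i hi)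
        _ = (N:ℝ) * (ρ^m * ((N-1).choose m : ℝ)) := by
            rw [Finset.sum_const, Finset.card_range, nsmul_eq_mul]
    refine ⟨m, by omega, ?_⟩
    show (ρ ^ m * ((N-1).choose m : ℝ))⁻¹ ≤ (N:ℝ) / (1+ρ)^(N-1)
    apply inv_le_of_one_le_mul htermpos (by positivity)
    rw [show ρ ^ m * (((N-1).choose m : ℝ)) * ((N:ℝ) / (1+ρ)^(N-1))
        = ((N:ℝ) * (ρ^m * ((N-1).choose m : ℝ))) / (1+ρ)^(N-1) by ring]
    rw [le_div_iff₀ (by positivity)]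
    linarith [hsum]
  -- bound on r i1
  have hri1 : rfun ρ N i1 ≤ (1+ρ/2)^N * ((N:ℝ)/(1+ρ)^(N-1)) := by
    obtain ⟨m, hmN, hmb⟩ := hmax
    have hbnn : (0:ℝ) ≤ (N:ℝ)/(1+ρ)^(N-1) := by positivity
    have hpowN : (1:ℝ) ≤ (1+ρ/2)^N := one_le_pow₀ (by linarith)
    rcases le_or_gt m i1 with h | h
    · have hch := chain_upper (rfun ρ N) (1+ρ/2) (by positivity) h
        (fun j hj hj' => hdn j (by omega) (by omega))
      calc rfun ρ N i1 ≤ (1+ρ/2)^(i1-m) * rfun ρ N m := hch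
        _ ≤ (1+ρ/2)^N * ((N:ℝ)/(1+ρ)^(N-1)) := by
            apply mul_le_mul _ hmb (hrnn m) (by positivity)
            exact pow_le_pow_right₀ (by linarith) (by omega)
    · have hgm := hgeo i1 m (le_refl _) (le_of_lt h) hmN
      have hge1 : (1:ℝ) ≤ (1+ρ/2)^(m-i1) := one_le_pow₀ (by linarith)
      nlinarith [hrnn i1, hrnn m]
  have hNri1 : (N:ℝ) * rfun ρ N i1 ≤ 1/N := by
    have key : (1+ρ) * ((1+ρ/2)/(1+ρ))^N = (1+ρ/2)^N / (1+ρ)^(N-1) := by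
      rw [div_pow]
      rw [show ((1:ℝ)+ρ)^N = (1+ρ)^(N-1) * (1+ρ) by rw [← pow_succ]; congr 1; omega]
      have h1 : ((1:ℝ)+ρ) ≠ 0 := by linarith
      have h2 : ((1:ℝ)+ρ)^(N-1) ≠ 0 := by positivity
      field_simp
    rw [key] at hexp
    have h2 : (N:ℝ) * rfun ρ N i1 ≤ (N:ℝ)^2 * ((1+ρ/2)^N / (1+ρ)^(N-1)) := by
      calc (N:ℝ) * rfun ρ N i1 ≤ (N:ℝ) * ((1+ρ/2)^N * ((N:ℝ)/(1+ρ)^(N-1))) := by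
            exact mul_le_mul_of_nonneg_left hri1 (le_of_lt hNpos)
        _ = (N:ℝ)^2 * ((1+ρ/2)^N / (1+ρ)^(N-1)) := by ring
    have h3 : (N:ℝ)^2 * ((1+ρ/2)^N / (1+ρ)^(N-1)) ≤ 1/N := by
      rw [le_div_iff₀ hNpos]
      calc (N:ℝ)^2 * ((1+ρ/2)^N / (1+ρ)^(N-1)) * N
          = (N:ℝ)^3 * ((1+ρ/2)^N / (1+ρ)^(N-1)) := by ring
        _ ≤ 1 := hexp
    linarith
  -- small values on the left
  have hr1 : rfun ρ N 1 ≤ (2/ρ)/N := by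
    have e : rfun ρ N 1 = (ρ * ((N:ℝ)-1))⁻¹ := by
      unfold rfun
      rw [Nat.choose_one_right, Nat.cast_sub (by omega : 1 ≤ N), pow_one]
      norm_num
    rw [e]
    have hN1' : (2:ℝ) ≤ (N:ℝ) := by exact_mod_cast (by omega : 2 ≤ N)
    apply inv_le_of_one_le_mul (by nlinarith) (by positivity)
    rw [div_div]
    rw [show ρ * ((N:ℝ)-1) * (2/(ρ*N)) = 2*((N:ℝ)-1)/N by field_simp]
    rw [le_div_iff₀ hNpos]
    linarith
  have hr2 : rfun ρ N 2 ≤ (8/ρ^2)/N^2 := by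
    have hc2 : (((N-1).choose 2 : ℕ) : ℝ) = ((N:ℝ)-1) * ((N:ℝ)-2) / 2 := by
      rw [Nat.cast_choose_two]
      rw [Nat.cast_sub (by omega : 1 ≤ N)]
      push_cast
      ring
    have e : rfun ρ N 2 = (ρ^2 * (((N:ℝ)-1) * ((N:ℝ)-2) / 2))⁻¹ := by
      unfold rfun; rw [hc2]
    rw [e]
    have hN4' : (4:ℝ) ≤ (N:ℝ) := by exact_mod_cast hN4
    have hprod : (0:ℝ) < ((N:ℝ)-1) * ((N:ℝ)-2) / 2 := by nlinarith
    apply inv_le_of_one_le_mul (mul_pos (pow_pos hρ 2) hprod) (by positivity)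
    rw [div_div]
    rw [show ρ^2 * (((N:ℝ)-1) * ((N:ℝ)-2) / 2) * (8/(ρ^2*N^2))
        = 4*(((N:ℝ)-1) * ((N:ℝ)-2))/N^2 by field_simp; ring]
    rw [le_div_iff₀ (by positivity)]
    nlinarith
  -- unimodal max bound on [2, i1]
  have hQpersist : ∀ j : ℕ, ρ * (((N:ℝ)-1) - (j:ℝ)) < (j:ℝ)+1 →
      ∀ i : ℕ, j ≤ i → ρ * (((N:ℝ)-1) - (i:ℝ)) < (i:ℝ)+1 := by
    intro j hj i hi
    induction i, hi using Nat.le_induction with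
    | base => exact hj
    | succ n hn ih =>
      have e : ((n+1:ℕ):ℝ) = (n:ℝ)+1 := by push_cast; ring
      rw [e]
      nlinarith
  have hCmax : ∀ i, 2 ≤ i → i ≤ i1 → rfun ρ N i ≤ rfun ρ N 2 ∨ rfun ρ N i ≤ rfun ρ N i1 := by
    have main : ∀ i, 2 ≤ i → i ≤ i1 →
        (∀ j, 2 ≤ j → j ≤ i → rfun ρ N j ≤ rfun ρ N 2) ∨
        (∃ a : ℕ, a < i ∧ ρ * (((N:ℝ)-1) - (a:ℝ)) < (a:ℝ)+1) := by
      intro i h2 hi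
      induction i, h2 using Nat.le_induction with
      | base =>
        left; intro j hj hj'
        have : j = 2 := by omega
        rw [this]
      | succ n hn ih =>
        have hni : n ≤ i1 := by omega
        rcases ih hni with hall | ⟨a, ha, hq⟩
        · by_cases hQ : (n:ℝ)+1 ≤ ρ * (((N:ℝ)-1) - (n:ℝ))
          · left
            intro j hj hj'
            rcases Nat.lt_or_ge j (n+1) with hlt | hge
            · exact hall j hj (by omega)
            · have hj2 : j = n+1 := by omega
              subst hj2
              have hstep : rfun ρ N (n+1) ≤ 1 * rfun ρ N n :=
                step_down hρ (by omega : n+1 ≤ N-1) (by rw [one_mul]; exact hQ)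
              rw [one_mul] at hstep
              exact le_trans hstep (hall n hn (le_refl n))
          · right
            exact ⟨n, by omega, not_le.1 hQ⟩
        · right; exact ⟨a, by omega, hq⟩
    intro i h2 hi
    rcases main i h2 hi with hall | ⟨a, ha, hq⟩
    · left; exact hall i h2 (le_refl i)
    · right
      have hchain := chain_lower (rfun ρ N) 1 (by norm_num) hi (fun j hj hj' => by
        rw [one_mul]
        have hqj : ρ * (((N:ℝ)-1) - (j:ℝ)) < (j:ℝ)+1 := hQpersist a hq j (by omega)
        have := step_up hρ (by norm_num : (0:ℝ) ≤ 1) (by omega : j+1 ≤ N-1)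
          (by rw [one_mul]; exact le_of_lt hqj)
        rw [one_mul] at this
        exact this)
      rw [one_pow, one_mul] at hchain
      exact hchain
  -- left-sum bound
  have hAsplit : Aρ ρ / N = 1/N + ((2/ρ)/N + ((8/ρ^2)/N + 0)) := by
    rw [Aρ]; field_simp; ring
  have hleft : ∀ k, k ≤ i1 + 1 → k ≤ N →
      (∑ i ∈ Finset.range k, rfun ρ N i) ≤ 1 + Aρ ρ / N := by
    intro k hk hkN
    rcases Nat.lt_or_ge k 2 with hk2 | hk2
    · calc (∑ i ∈ Finset.range k, rfun ρ N i) ≤ ∑ i ∈ Finset.range 1, rfun ρ N i := by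
            apply Finset.sum_le_sum_of_subset_of_nonneg (Finset.range_subset_range.2 (by omega))
            intro i _ _; exact hrnn i
        _ = 1 := by rw [Finset.sum_range_one, rfun_zero]
        _ ≤ 1 + Aρ ρ / N := by linarith
    · have hsplit : (∑ i ∈ Finset.range k, rfun ρ N i)
          = (rfun ρ N 0 + rfun ρ N 1) + ∑ i ∈ Finset.Ico 2 k, rfun ρ N i := by
        rw [Finset.range_eq_Ico, ← Finset.sum_Ico_consecutive _ (by omega : 0 ≤ 2) hk2]
        congr 1
        rw [show Finset.Ico 0 2 = Finset.range 2 by rw [Finset.range_eq_Ico]]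
        rw [Finset.sum_range_succ, Finset.sum_range_one]
      have hbound : ∀ i ∈ Finset.Ico 2 k, rfun ρ N i ≤ rfun ρ N 2 + rfun ρ N i1 := by
        intro i hi
        obtain ⟨h2i, hik⟩ := Finset.mem_Ico.1 hi
        rcases hCmax i h2i (by omega) with h | h
        · linarith [hrnn i1]
        · linarith [hrnn 2]
      have hsum2 : ∑ i ∈ Finset.Ico 2 k, rfun ρ N i
          ≤ ((k-2:ℕ):ℝ) * (rfun ρ N 2 + rfun ρ N i1) := by
        have := Finset.sum_le_card_nsmul (Finset.Ico 2 k) (rfun ρ N)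
          (rfun ρ N 2 + rfun ρ N i1) hbound
        rwa [Nat.card_Ico, nsmul_eq_mul] at this
      have hcard : ((k-2:ℕ):ℝ) ≤ (N:ℝ) := by exact_mod_cast (by omega : k - 2 ≤ N)
      have hcard0 : (0:ℝ) ≤ ((k-2:ℕ):ℝ) := by positivity
      have h1 : ((k-2:ℕ):ℝ) * rfun ρ N 2 ≤ (8/ρ^2)/N := by
        calc ((k-2:ℕ):ℝ) * rfun ρ N 2 ≤ (N:ℝ) * ((8/ρ^2)/N^2) := by
              apply mul_le_mul hcard hr2 (hrnn 2) (le_of_lt hNpos)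
          _ = (8/ρ^2)/N := by field_simp
      have h2 : ((k-2:ℕ):ℝ) * rfun ρ N i1 ≤ 1/N := by
        calc ((k-2:ℕ):ℝ) * rfun ρ N i1 ≤ (N:ℝ) * rfun ρ N i1 :=
              mul_le_mul_of_nonneg_right hcard (hrnn i1)
          _ ≤ 1/N := hNri1
      rw [hsplit, rfun_zero, hAsplit]
      have := mul_add ((k-2:ℕ):ℝ) (rfun ρ N 2) (rfun ρ N i1)
      linarith [hsum2, hr1]
  -- the crossing index K
  set Kp : ℕ → Prop := fun k => (∑ i ∈ Finset.range k, rfun ρ N i) ≤ 3/2 with hKpdef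
  set K := Nat.findGreatest Kp N with hKdef
  have hKp1 : Kp 1 := by
    rw [hKpdef]
    simp only [Finset.sum_range_one, rfun_zero]
    norm_num
  have hK1 : 1 ≤ K := Nat.le_findGreatest (by omega) hKp1
  have hKN : K ≤ N := Nat.findGreatest_le N
  have hSK : (∑ i ∈ Finset.range K, rfun ρ N i) ≤ 3/2 :=
    Nat.findGreatest_spec (by omega : 1 ≤ N) hKp1
  have hKmax : ∀ k, K < k → k ≤ N → 3/2 < ∑ i ∈ Finset.range k, rfun ρ N i :=
    fun k h1 h2 => not_le.1 (Nat.findGreatest_is_greatest h1 h2)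
  have hi1K : i1 ≤ K := by
    by_contra h
    push_neg at h
    have hKi1 : K + 1 ≤ i1 + 1 := by omega
    have hKN' : K + 1 ≤ N := by omega
    have := hleft (K+1) hKi1 hKN'
    have := hKmax (K+1) (by omega) hKN'
    linarith
  -- lower-region bound on S
  have hlowS : ∀ k, 1 ≤ k → k ≤ K →
      (∑ i ∈ Finset.range k, rfun ρ N i) ≤ 1 + (Aρ ρ / N + Bρ ρ * cρ ρ ^ (K - k)) := by
    intro k hk1 hkK
    have hBc : 0 ≤ Bρ ρ * cρ ρ ^ (K-k) := by positivity
    rcases le_or_gt k (i1+1) with h | h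
    · have := hleft k h (le_trans hkK hKN)
      linarith
    · have h2K : 2 ≤ K := by omega
      have hrK1 : rfun ρ N (K-1) ≤ 1/2 := by
        have e : K = (K-1) + 1 := by omega
        have h1 : (∑ i ∈ Finset.range ((K-1)+1), rfun ρ N i)
            = (∑ i ∈ Finset.range (K-1), rfun ρ N i) + rfun ρ N (K-1) :=
          Finset.sum_range_succ _ _
        have h2 : 1 ≤ ∑ i ∈ Finset.range (K-1), rfun ρ N i := one_le_S hρ N (by omega)
        have h3 : (∑ i ∈ Finset.range ((K-1)+1), rfun ρ N i) ≤ 3/2 := by rw [← e]; exact hSK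
        linarith
      have hsplit : (∑ i ∈ Finset.range k, rfun ρ N i)
          = (∑ i ∈ Finset.range (i1+1), rfun ρ N i) + ∑ i ∈ Finset.Ico (i1+1) k, rfun ρ N i := by
        simp only [Finset.range_eq_Ico]
        exact (Finset.sum_Ico_consecutive _ (by omega : 0 ≤ i1+1) (by omega : i1+1 ≤ k)).symm
      have hterm : ∀ i ∈ Finset.Ico (i1+1) k, rfun ρ N i ≤ (1/2) * cρ ρ ^ (K - 1 - i) := by
        intro i hi
        obtain ⟨hi1', hik⟩ := Finset.mem_Ico.1 hi
        have hge := hgeo i (K-1) (by omega) (by omega) (by omega)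
        have hple : (1+ρ/2)^(K-1-i) * rfun ρ N i ≤ 1/2 := le_trans hge hrK1
        have hppos : (0:ℝ) < (1+ρ/2)^(K-1-i) := by positivity
        have hcc : cρ ρ ^ (K-1-i) = ((1+ρ/2) ^ (K-1-i))⁻¹ := by rw [hcval, inv_pow]
        rw [hcc]
        calc rfun ρ N i = ((1+ρ/2)^(K-1-i))⁻¹ * ((1+ρ/2)^(K-1-i) * rfun ρ N i) := by
              field_simp
          _ ≤ ((1+ρ/2)^(K-1-i))⁻¹ * (1/2) := by
              apply mul_le_mul_of_nonneg_left hple (by positivity)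
          _ = 1/2 * ((1+ρ/2)^(K-1-i))⁻¹ := by ring
      have hsum : ∑ i ∈ Finset.Ico (i1+1) k, rfun ρ N i ≤ Bρ ρ * cρ ρ ^ (K - k) := by
        calc ∑ i ∈ Finset.Ico (i1+1) k, rfun ρ N i
            ≤ ∑ i ∈ Finset.Ico (i1+1) k, (1/2) * cρ ρ ^ (K-1-i) := Finset.sum_le_sum hterm
          _ ≤ ∑ i ∈ Finset.range k, (1/2) * cρ ρ ^ (K-1-i) := by
              apply Finset.sum_le_sum_of_subset_of_nonneg
              · rw [Finset.range_eq_Ico]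
                exact Finset.Ico_subset_Ico (by omega) (le_refl k)
              · intro i _ _; positivity
          _ = ∑ j ∈ Finset.range k, (1/2) * cρ ρ ^ (K-1-(k-1-j)) :=
              (Finset.sum_range_reflect (fun i => (1/2) * cρ ρ ^ (K-1-i)) k).symm
          _ = ∑ j ∈ Finset.range k, (1/2) * (cρ ρ ^ (K-k) * cρ ρ ^ j) := by
              apply Finset.sum_congr rfl
              intro j hj
              rw [← pow_add]
              congr 2
              have := Finset.mem_range.1 hj
              omega
          _ = (1/2) * (cρ ρ ^ (K-k) * ∑ j ∈ Finset.range k, cρ ρ ^ j) := by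
              rw [← Finset.mul_sum, ← Finset.mul_sum]
          _ ≤ (1/2) * (cρ ρ ^ (K-k) * (1 - cρ ρ)⁻¹) := by
              apply mul_le_mul_of_nonneg_left _ (by norm_num)
              apply mul_le_mul_of_nonneg_left (geom_sum_le_inv (le_of_lt hcpos) hc1 k)
                (by positivity)
          _ = Bρ ρ * cρ ρ ^ (K-k) := by
              rw [hcinv, Bρ]
              field_simp
      have hfirst := hleft (i1+1) (le_refl _) (by omega)
      rw [hsplit]
      linarith
  -- tail lower bound
  have hlowT : ∀ k, 1 ≤ k → k ≤ K →
      1 - (Aρ ρ / N + Bρ ρ * cρ ρ ^ (K - k)) ≤ tailP ρ N k := by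
    intro k hk1 hkK
    rw [hT k (le_trans hkK hKN)]
    have hu0 : 0 ≤ Aρ ρ / N + Bρ ρ * cρ ρ ^ (K-k) := by positivity
    have hS1 : 1 ≤ ∑ i ∈ Finset.range k, rfun ρ N i := one_le_S hρ N hk1
    have hSle := hlowS k hk1 hkK
    set u := Aρ ρ / N + Bρ ρ * cρ ρ ^ (K-k) with hu
    have hSpos : 0 < ∑ i ∈ Finset.range k, rfun ρ N i := by linarith
    have hinv : (1+u)⁻¹ ≤ (∑ i ∈ Finset.range k, rfun ρ N i)⁻¹ := by
      apply inv_anti₀ hSpos hSle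
    have h2 : 1 - u ≤ (1+u)⁻¹ := by
      have hpos : (0:ℝ) < 1 + u := by linarith
      have hm : (1-u)*(1+u) ≤ 1 := by nlinarith [sq_nonneg u]
      have := mul_le_mul_of_nonneg_right hm (inv_nonneg.2 hpos.le)
      calc 1 - u = (1-u)*(1+u) * (1+u)⁻¹ := by field_simp
        _ ≤ 1 * (1+u)⁻¹ := this
        _ = (1+u)⁻¹ := one_mul _
    linarith
  -- r K is big when K < N
  have hrKbig : K < N → c0ρ ρ ≤ rfun ρ N K := by
    intro hKltN
    have hgt := hKmax (K+1) (by omega) (by omega)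
    have hsplit : (∑ i ∈ Finset.range (K+1), rfun ρ N i)
        = (∑ i ∈ Finset.range (i1+1), rfun ρ N i) + ∑ i ∈ Finset.Ico (i1+1) (K+1), rfun ρ N i := by
      simp only [Finset.range_eq_Ico]
      exact (Finset.sum_Ico_consecutive _ (by omega : 0 ≤ i1+1) (by omega : i1+1 ≤ K+1)).symm
    have hterm : ∀ i ∈ Finset.Ico (i1+1) (K+1), rfun ρ N i ≤ rfun ρ N K * cρ ρ ^ (K - i) := by
      intro i hi
      obtain ⟨hi1', hik⟩ := Finset.mem_Ico.1 hi
      have hge := hgeo i K (by omega) (by omega) (by omega)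
      have hppos : (0:ℝ) < (1+ρ/2)^(K-i) := by positivity
      have hcc : cρ ρ ^ (K-i) = ((1+ρ/2) ^ (K-i))⁻¹ := by rw [hcval, inv_pow]
      rw [hcc]
      calc rfun ρ N i = ((1+ρ/2)^(K-i))⁻¹ * ((1+ρ/2)^(K-i) * rfun ρ N i) := by
            field_simp
        _ ≤ ((1+ρ/2)^(K-i))⁻¹ * rfun ρ N K := by
            apply mul_le_mul_of_nonneg_left hge (by positivity)
        _ = rfun ρ N K * ((1+ρ/2)^(K-i))⁻¹ := by ring
    have hsum : ∑ i ∈ Finset.Ico (i1+1) (K+1), rfun ρ N i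
        ≤ rfun ρ N K * ((1+ρ/2)/(ρ/2)) := by
      calc ∑ i ∈ Finset.Ico (i1+1) (K+1), rfun ρ N i
          ≤ ∑ i ∈ Finset.Ico (i1+1) (K+1), rfun ρ N K * cρ ρ ^ (K-i) :=
            Finset.sum_le_sum hterm
        _ ≤ ∑ i ∈ Finset.range (K+1), rfun ρ N K * cρ ρ ^ (K-i) := by
            apply Finset.sum_le_sum_of_subset_of_nonneg
            · rw [Finset.range_eq_Ico]
              exact Finset.Ico_subset_Ico (by omega) (le_refl _)
            · intro i _ _
              have := hrnn K
              positivity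
        _ = ∑ j ∈ Finset.range (K+1), rfun ρ N K * cρ ρ ^ (K-(K-j)) :=
            (Finset.sum_range_reflect (fun i => rfun ρ N K * cρ ρ ^ (K-i)) (K+1)).symm
        _ = ∑ j ∈ Finset.range (K+1), rfun ρ N K * cρ ρ ^ j := by
            apply Finset.sum_congr rfl
            intro j hj
            congr 2
            have := Finset.mem_range.1 hj
            omega
        _ = rfun ρ N K * ∑ j ∈ Finset.range (K+1), cρ ρ ^ j := by rw [← Finset.mul_sum]
        _ ≤ rfun ρ N K * (1 - cρ ρ)⁻¹ := by
            apply mul_le_mul_of_nonneg_left (geom_sum_le_inv (le_of_lt hcpos) hc1 _) (hrnn K)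
        _ = rfun ρ N K * ((1+ρ/2)/(ρ/2)) := by rw [hcinv]
    have hfirst := hleft (i1+1) (le_refl _) (by omega)
    rw [hsplit] at hgt
    have hq : (0:ℝ) < (1+ρ/2)/(ρ/2) := by positivity
    have h5 : 1/4 ≤ rfun ρ N K * ((1+ρ/2)/(ρ/2)) := by linarith
    rw [c0ρ]
    rw [show ρ/(8*(1+ρ/2)) = (1/4) / ((1+ρ/2)/(ρ/2)) by field_simp; ring]
    rw [div_le_iff₀ hq]
    linarith
  -- tail upper bound
  have hupT : ∀ k, K < k → k ≤ N →
      tailP ρ N k ≤ (c0ρ ρ)⁻¹ * cρ ρ ^ (k - 1 - K) := by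
    intro k hKk hkN
    have hKltN : K < N := lt_of_lt_of_le hKk hkN
    have hc0 := hrKbig hKltN
    have hge := hgeo K (k-1) hi1K (by omega) (by omega)
    have hrk1 : (1+ρ/2)^(k-1-K) * c0ρ ρ ≤ rfun ρ N (k-1) := by
      calc (1+ρ/2)^(k-1-K) * c0ρ ρ ≤ (1+ρ/2)^(k-1-K) * rfun ρ N K := by
            apply mul_le_mul_of_nonneg_left hc0 (by positivity)
        _ ≤ rfun ρ N (k-1) := hge
    have hSk : (1+ρ/2)^(k-1-K) * c0ρ ρ ≤ ∑ i ∈ Finset.range k, rfun ρ N i := by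
      apply le_trans hrk1
      exact Finset.single_le_sum (fun i _ => hrnn i) (Finset.mem_range.2 (by omega))
    rw [hT k hkN]
    have hpos : (0:ℝ) < (1+ρ/2)^(k-1-K) * c0ρ ρ := by positivity
    have hinv : (∑ i ∈ Finset.range k, rfun ρ N i)⁻¹ ≤ ((1+ρ/2)^(k-1-K) * c0ρ ρ)⁻¹ :=
      inv_anti₀ hpos hSk
    calc (∑ i ∈ Finset.range k, rfun ρ N i)⁻¹ ≤ ((1+ρ/2)^(k-1-K) * c0ρ ρ)⁻¹ := hinv
      _ = (c0ρ ρ)⁻¹ * cρ ρ ^ (k-1-K) := by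
          rw [mul_inv, hcval, inv_pow]
          ring
  -- expectation bounds
  have hqpos : (0:ℝ) < (1+ρ/2)/(ρ/2) := by positivity
  have hB3 : B3ρ ρ = Aρ ρ + Bρ ρ * ((1+ρ/2)/(ρ/2)) + (c0ρ ρ)⁻¹ * ((1+ρ/2)/(ρ/2)) := rfl
  have hgeomIcc : ∑ k ∈ Finset.Icc 1 K, cρ ρ^(K-k) ≤ (1+ρ/2)/(ρ/2) := by
    rw [show Finset.Icc 1 K = Finset.Ico 1 (K+1) by rw [Finset.Ico_add_one_right_eq_Icc]]
    rw [Finset.sum_Ico_eq_sum_range]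
    rw [show K + 1 - 1 = K by omega]
    calc ∑ j ∈ Finset.range K, cρ ρ ^ (K-(1+j))
        = ∑ j ∈ Finset.range K, cρ ρ ^ (K-1-j) := by
          apply Finset.sum_congr rfl; intro j _; congr 1; omega
      _ = ∑ j ∈ Finset.range K, cρ ρ ^ j := Finset.sum_range_reflect (fun j => cρ ρ ^ j) K
      _ ≤ (1 - cρ ρ)⁻¹ := geom_sum_le_inv (le_of_lt hcpos) hc1 K
      _ = (1+ρ/2)/(ρ/2) := hcinv
  have hEHlow : (K:ℝ) - B3ρ ρ ≤ EH ρ N := by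
    have h1 : ∑ k ∈ Finset.Icc 1 K, tailP ρ N k ≤ EH ρ N := by
      rw [EH]
      apply Finset.sum_le_sum_of_subset_of_nonneg (Finset.Icc_subset_Icc (le_refl 1) hKN)
      intro k _ _; exact tailP_nonneg hρ N k
    have h2 : ∑ k ∈ Finset.Icc 1 K, (1 - (Aρ ρ/N + Bρ ρ * cρ ρ^(K-k)))
        ≤ ∑ k ∈ Finset.Icc 1 K, tailP ρ N k := by
      apply Finset.sum_le_sum
      intro k hk
      obtain ⟨hk1, hk2⟩ := Finset.mem_Icc.1 hk
      exact hlowT k hk1 hk2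
    have h3 : ∑ k ∈ Finset.Icc 1 K, (1 - (Aρ ρ/N + Bρ ρ * cρ ρ^(K-k)))
        = (K:ℝ) * (1 - Aρ ρ/N) - Bρ ρ * ∑ k ∈ Finset.Icc 1 K, cρ ρ^(K-k) := by
      rw [Finset.mul_sum]
      rw [show (K:ℝ) * (1 - Aρ ρ/N) = ∑ _k ∈ Finset.Icc 1 K, (1 - Aρ ρ/N) by
        rw [Finset.sum_const, Nat.card_Icc, show K + 1 - 1 = K by omega, nsmul_eq_mul]]
      rw [← Finset.sum_sub_distrib]
      apply Finset.sum_congr rfl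
      intro k _
      ring
    have h4 : (K:ℝ) * (Aρ ρ / N) ≤ Aρ ρ := by
      have hKcast : (K:ℝ) ≤ (N:ℝ) := by exact_mod_cast hKN
      calc (K:ℝ) * (Aρ ρ / N) ≤ (N:ℝ) * (Aρ ρ / N) :=
            mul_le_mul_of_nonneg_right hKcast hANpos
        _ = Aρ ρ := by field_simp
    have h5 : Bρ ρ * ∑ k ∈ Finset.Icc 1 K, cρ ρ^(K-k) ≤ Bρ ρ * ((1+ρ/2)/(ρ/2)) :=
      mul_le_mul_of_nonneg_left hgeomIcc (le_of_lt hBpos)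
    have h6 : 0 ≤ (c0ρ ρ)⁻¹ * ((1+ρ/2)/(ρ/2)) := by positivity
    rw [hB3]
    nlinarith [h1, h2, h3, h4, h5]
  have hEHhigh : EH ρ N ≤ (K:ℝ) + B3ρ ρ := by
    have hsplitE : EH ρ N = (∑ k ∈ Finset.Ioc 0 K, tailP ρ N k)
        + ∑ k ∈ Finset.Ioc K N, tailP ρ N k := by
      rw [EH]
      rw [show Finset.Icc 1 N = Finset.Ioc 0 N by rw [← Finset.Icc_add_one_left_eq_Ioc]; rfl]
      rw [Finset.sum_Ioc_consecutive _ (by omega : 0 ≤ K) hKN]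
    have hfirst : ∑ k ∈ Finset.Ioc 0 K, tailP ρ N k ≤ (K:ℝ) := by
      calc ∑ k ∈ Finset.Ioc 0 K, tailP ρ N k ≤ ∑ _k ∈ Finset.Ioc 0 K, (1:ℝ) :=
            Finset.sum_le_sum (fun k _ => tailP_le_one hρ N k)
        _ = (K:ℝ) := by
            rw [Finset.sum_const, Nat.card_Ioc, nsmul_eq_mul, mul_one]
            norm_num
    have hsecond : ∑ k ∈ Finset.Ioc K N, tailP ρ N k ≤ (c0ρ ρ)⁻¹ * ((1+ρ/2)/(ρ/2)) := by
      calc ∑ k ∈ Finset.Ioc K N, tailP ρ N k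
          ≤ ∑ k ∈ Finset.Ioc K N, (c0ρ ρ)⁻¹ * cρ ρ^(k-1-K) := by
            apply Finset.sum_le_sum
            intro k hk
            obtain ⟨h1, h2⟩ := Finset.mem_Ioc.1 hk
            exact hupT k h1 h2
        _ = ∑ j ∈ Finset.range (N - K), (c0ρ ρ)⁻¹ * cρ ρ^((K+1+j)-1-K) := by
            rw [show Finset.Ioc K N = Finset.Ico (K+1) (N+1) by
              rw [← Finset.Icc_add_one_left_eq_Ioc, Finset.Ico_add_one_right_eq_Icc]]
            rw [Finset.sum_Ico_eq_sum_range]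
            rw [show N + 1 - (K + 1) = N - K by omega]
        _ = ∑ j ∈ Finset.range (N - K), (c0ρ ρ)⁻¹ * cρ ρ^j := by
            apply Finset.sum_congr rfl
            intro j _
            congr 2
            omega
        _ = (c0ρ ρ)⁻¹ * ∑ j ∈ Finset.range (N - K), cρ ρ^j := by rw [← Finset.mul_sum]
        _ ≤ (c0ρ ρ)⁻¹ * (1 - cρ ρ)⁻¹ := by
            apply mul_le_mul_of_nonneg_left (geom_sum_le_inv (le_of_lt hcpos) hc1 _)
              (by positivity)
        _ = (c0ρ ρ)⁻¹ * ((1+ρ/2)/(ρ/2)) := by rw [hcinv]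
    have h6 : 0 ≤ Bρ ρ * ((1+ρ/2)/(ρ/2)) := by positivity
    rw [hB3, hsplitE]
    linarith [hApos]
  exact ⟨K, hK1, hKN, ⟨hEHlow, hEHhigh⟩, hlowT, hupT⟩

lemma pow_le_exp_bound {c L s : ℝ} (hc : c = Real.exp (-L)) (hL : 0 < L) (n : ℕ)
    (hs : s ≤ n) : c ^ n ≤ Real.exp (-(s*L)) := by
  rw [hc, ← Real.exp_nat_mul]
  apply Real.exp_le_exp.2
  nlinarith

theorem height_fluctuation_degenerate (ρ : ℝ) (hρ : 0 < ρ) (φ : ℕ → ℝ)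
    (hφpos : ∀ N, 0 < φ N)
    (hφ : Tendsto (fun N : ℕ => Real.log N / φ N) atTop (𝓝 0)) :
    (∀ x : ℝ, x < 0 →
        Tendsto (fun N : ℕ => cdfP ρ N (EH ρ N + x * φ N)) atTop (𝓝 0)) ∧
    (∀ x : ℝ, 0 < x →
        Tendsto (fun N : ℕ => cdfP ρ N (EH ρ N + x * φ N)) atTop (𝓝 1)) := by
  have hδ : (0:ℝ) < ρ/2 := by positivity
  set L := Real.log (1+ρ/2) with hLdef
  have hL : 0 < L := Real.log_pos (by linarith)
  have hcexp : cρ ρ = Real.exp (-L) := by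
    rw [Real.exp_neg, hLdef, Real.exp_log (by linarith)]
    rfl
  have hApos : 0 < Aρ ρ := by rw [Aρ]; positivity
  have hBpos : 0 < Bρ ρ := by rw [Bρ]; positivity
  have hc0pos : 0 < c0ρ ρ := by rw [c0ρ]; positivity
  have hB3pos : 0 < B3ρ ρ := by
    have h1 : 0 ≤ Bρ ρ * ((1+ρ/2)/(ρ/2)) := by positivity
    have h2 : 0 ≤ (c0ρ ρ)⁻¹ * ((1+ρ/2)/(ρ/2)) := by positivity
    have : B3ρ ρ = Aρ ρ + Bρ ρ * ((1+ρ/2)/(ρ/2)) + (c0ρ ρ)⁻¹ * ((1+ρ/2)/(ρ/2)) := rfl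
    linarith
  -- φ tends to infinity
  have hφtop : Tendsto φ atTop atTop := by
    rw [tendsto_atTop]
    intro b
    have hbpos : (0:ℝ) < max b 1 := lt_of_lt_of_le one_pos (le_max_right _ _)
    have h1 : ∀ᶠ N : ℕ in atTop, Real.log N / φ N < (max b 1)⁻¹ :=
      hφ.eventually (gt_mem_nhds (by positivity))
    filter_upwards [h1, eventually_ge_atTop 3] with N hN1 hN3
    have hφp := hφpos N
    have hlog : 1 ≤ Real.log N := by
      have he : Real.exp 1 < 3 := lt_of_lt_of_le Real.exp_one_lt_d9 (by norm_num)
      have h3 : (3:ℝ) ≤ (N:ℝ) := by exact_mod_cast hN3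
      have : Real.exp 1 ≤ (N:ℝ) := by linarith
      calc (1:ℝ) = Real.log (Real.exp 1) := (Real.log_exp 1).symm
        _ ≤ Real.log N := Real.log_le_log (Real.exp_pos 1) this
    rw [div_lt_iff₀ hφp] at hN1
    have h2 : (max b 1) * Real.log N < φ N := by
      have := mul_lt_mul_of_pos_left hN1 hbpos
      rw [← mul_assoc, mul_inv_cancel₀ (ne_of_gt hbpos), one_mul] at this
      linarith
    nlinarith [le_max_left b 1, le_max_right b 1]
  -- eventual hypotheses of the bundle lemma
  have hcq : (0:ℝ) ≤ (1+ρ/2)/(1+ρ) := by positivity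
  have hcq1 : (1+ρ/2)/(1+ρ) < 1 := by
    rw [div_lt_one (by linarith)]; linarith
  have hexp_ev : ∀ᶠ N : ℕ in atTop, (N:ℝ)^3 * ((1+ρ) * ((1+ρ/2)/(1+ρ))^N) ≤ 1 := by
    have h0 : Tendsto (fun N : ℕ => (N:ℝ)^3 * ((1+ρ/2)/(1+ρ))^N) atTop (𝓝 0) :=
      tendsto_pow_const_mul_const_pow_of_lt_one 3 hcq hcq1
    have h1 : Tendsto (fun N : ℕ => (N:ℝ)^3 * ((1+ρ) * ((1+ρ/2)/(1+ρ))^N)) atTop (𝓝 0) := by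
      have := h0.const_mul (1+ρ)
      rw [mul_zero] at this
      apply this.congr
      intro N; ring
    exact h1.eventually_le_const (by norm_num)
  have hA_ev : ∀ᶠ N : ℕ in atTop, Aρ ρ ≤ (N:ℝ)/4 := by
    have h0 : Tendsto (fun N : ℕ => (N:ℝ)/4) atTop atTop :=
      (tendsto_natCast_atTop_atTop).atTop_div_const (by norm_num)
    exact h0.eventually_ge_atTop (Aρ ρ)
  have hbundle_ev : ∀ᶠ N : ℕ in atTop, 4 ≤ N ∧ ∃ K : ℕ, 1 ≤ K ∧ K ≤ N ∧
      ((K:ℝ) - B3ρ ρ ≤ EH ρ N ∧ EH ρ N ≤ (K:ℝ) + B3ρ ρ) ∧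
      (∀ k : ℕ, 1 ≤ k → k ≤ K →
        1 - (Aρ ρ / N + Bρ ρ * cρ ρ ^ (K - k)) ≤ tailP ρ N k) ∧
      (∀ k : ℕ, K < k → k ≤ N →
        tailP ρ N k ≤ (c0ρ ρ)⁻¹ * cρ ρ ^ (k - 1 - K)) := by
    filter_upwards [eventually_ge_atTop 4, hexp_ev, hA_ev] with N h4 he ha
    exact ⟨h4, bundle ρ hρ N h4 he ha⟩
  constructor
  · -- x < 0
    intro x hx
    set s : ℕ → ℝ := fun N => (-x) * φ N - B3ρ ρ - 1 with hsdef
    have hstop : Tendsto s atTop atTop := by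
      apply tendsto_atTop_add_const_right
      apply tendsto_atTop_add_const_right
      exact hφtop.const_mul_atTop (by linarith : (0:ℝ) < -x)
    set g : ℕ → ℝ := fun N => Aρ ρ / N + Bρ ρ * Real.exp (-(s N * L)) with hgdef
    have hg0 : Tendsto g atTop (𝓝 0) := by
      have h1 : Tendsto (fun N : ℕ => Aρ ρ / N) atTop (𝓝 0) :=
        tendsto_const_div_atTop_nhds_zero_nat (Aρ ρ)
      have h2 : Tendsto (fun N : ℕ => -(s N * L)) atTop atBot := by
        apply tendsto_neg_atBot_iff.2
        exact hstop.atTop_mul_const hL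
      have h3 : Tendsto (fun N : ℕ => Bρ ρ * Real.exp (-(s N * L))) atTop (𝓝 0) := by
        have := (Real.tendsto_exp_atBot.comp h2).const_mul (Bρ ρ)
        rw [mul_zero] at this
        exact this
      have := h1.add h3
      rw [add_zero] at this
      exact this
    apply tendsto_of_tendsto_of_tendsto_of_le_of_le' tendsto_const_nhds hg0
    · -- 0 ≤ cdfP eventually
      filter_upwards [hbundle_ev, eventually_ge_atTop 1] with N hb h1
      obtain ⟨h4, K, hK1, hKN, ⟨hEH1, hEH2⟩, hlowT, hupT⟩ := hb
      set t := EH ρ N + x * φ N with htdef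
      rcases lt_or_ge t 1 with ht | ht
      · rw [cdfP_of_lt_one N t ht]
      · rw [cdfP_eval N (by omega) t ht]
        have := tailP_le_one hρ N (min N ⌊t⌋₊ + 1)
        linarith
    · -- cdfP ≤ g eventually
      have hsev : ∀ᶠ N : ℕ in atTop, B3ρ ρ + 2 ≤ (-x) * φ N :=
        (hφtop.const_mul_atTop (by linarith : (0:ℝ) < -x)).eventually_ge_atTop _
      filter_upwards [hbundle_ev, hsev, eventually_ge_atTop 1] with N hb hsN h1
      obtain ⟨h4, K, hK1, hKN, ⟨hEH1, hEH2⟩, hlowT, hupT⟩ := hb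
      have hgnn : 0 ≤ Bρ ρ * Real.exp (-(s N * L)) := by positivity
      have hANnn : 0 ≤ Aρ ρ / N := by positivity
      set t := EH ρ N + x * φ N with htdef
      rcases lt_or_ge t 1 with ht | ht
      · rw [cdfP_of_lt_one N t ht]
        simp only [hgdef]
        linarith
      · rw [cdfP_eval N (by omega) t ht]
        set m := min N ⌊t⌋₊ with hmdef
        have hft : (⌊t⌋₊ : ℝ) ≤ t := Nat.floor_le (by linarith)
        have htK : t ≤ (K:ℝ) - 2 := by
          have : (-x) * φ N ≥ B3ρ ρ + 2 := hsN
          simp only [htdef]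
          linarith
        have hmK : m + 1 ≤ K := by
          have h5 : (⌊t⌋₊ : ℝ) ≤ (K:ℝ) - 2 := le_trans hft htK
          have h6 : ⌊t⌋₊ + 2 ≤ K := by exact_mod_cast (by linarith : (⌊t⌋₊:ℝ) + 2 ≤ (K:ℝ))
          omega
        have hlow := hlowT (m+1) (by omega) hmK
        have hcast : ((K - (m+1) : ℕ) : ℝ) = (K:ℝ) - (m:ℝ) - 1 := by
          push_cast [Nat.cast_sub hmK]
          ring
        have hsle : s N ≤ ((K - (m+1) : ℕ) : ℝ) := by
          rw [hcast]
          have hmt : (m:ℝ) ≤ t := le_trans (by exact_mod_cast min_le_right N ⌊t⌋₊) hft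
          simp only [hsdef, htdef] at *
          nlinarith [hEH2]
        have hpow : cρ ρ ^ (K - (m+1)) ≤ Real.exp (-(s N * L)) :=
          pow_le_exp_bound hcexp hL _ hsle
        have hble : Bρ ρ * cρ ρ ^ (K - (m+1)) ≤ Bρ ρ * Real.exp (-(s N * L)) :=
          mul_le_mul_of_nonneg_left hpow (le_of_lt hBpos)
        simp only [hgdef]
        linarith
  · -- x > 0
    intro x hx
    set s : ℕ → ℝ := fun N => x * φ N - B3ρ ρ - 1 with hsdef
    have hstop : Tendsto s atTop atTop := by
      apply tendsto_atTop_add_const_right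
      apply tendsto_atTop_add_const_right
      exact hφtop.const_mul_atTop hx
    set g : ℕ → ℝ := fun N => 1 - (c0ρ ρ)⁻¹ * Real.exp (-(s N * L)) with hgdef
    have hg1 : Tendsto g atTop (𝓝 1) := by
      have h2 : Tendsto (fun N : ℕ => -(s N * L)) atTop atBot := by
        apply tendsto_neg_atBot_iff.2
        exact hstop.atTop_mul_const hL
      have h3 : Tendsto (fun N : ℕ => (c0ρ ρ)⁻¹ * Real.exp (-(s N * L))) atTop (𝓝 0) := by
        have := (Real.tendsto_exp_atBot.comp h2).const_mul (c0ρ ρ)⁻¹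
        rw [mul_zero] at this
        exact this
      have := (tendsto_const_nhds (x := (1:ℝ)) (f := atTop (α := ℕ))).sub h3
      rw [sub_zero] at this
      exact this
    apply tendsto_of_tendsto_of_tendsto_of_le_of_le' hg1 tendsto_const_nhds
    · -- g ≤ cdfP eventually
      have hsev : ∀ᶠ N : ℕ in atTop, B3ρ ρ + 2 ≤ x * φ N :=
        (hφtop.const_mul_atTop hx).eventually_ge_atTop _
      filter_upwards [hbundle_ev, hsev, eventually_ge_atTop 1] with N hb hsN h1
      obtain ⟨h4, K, hK1, hKN, ⟨hEH1, hEH2⟩, hlowT, hupT⟩ := hb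
      have hgnn : 0 ≤ (c0ρ ρ)⁻¹ * Real.exp (-(s N * L)) := by positivity
      set t := EH ρ N + x * φ N with htdef
      have htK : (K:ℝ) + 2 ≤ t := by
        have : x * φ N ≥ B3ρ ρ + 2 := hsN
        simp only [htdef]
        linarith
      have hK1R : (1:ℝ) ≤ (K:ℝ) := by exact_mod_cast hK1
      have ht : 1 ≤ t := by linarith
      rw [cdfP_eval N (by omega) t ht]
      rcases le_or_gt N ⌊t⌋₊ with hNf | hNf
      · have hmin : min N ⌊t⌋₊ = N := min_eq_left hNf
        rw [hmin]
        have : tailP ρ N (N+1) = 0 := if_neg (by omega)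
        rw [this]
        simp only [hgdef]
        linarith
      · have hmin : min N ⌊t⌋₊ = ⌊t⌋₊ := min_eq_right (le_of_lt hNf)
        rw [hmin]
        set m := ⌊t⌋₊ with hmdef
        have hmt : t - 1 < (m:ℝ) := by
          have := Nat.lt_floor_add_one t
          linarith
        have hKm : K + 1 ≤ m := by
          have : (K:ℝ) + 1 ≤ (m:ℝ) := by linarith
          exact_mod_cast this
        have hup := hupT (m+1) (by omega) (by omega)
        have hcast : ((m + 1 - 1 - K : ℕ) : ℝ) = (m:ℝ) - (K:ℝ) := by
          rw [show m + 1 - 1 - K = m - K by omega, Nat.cast_sub (by omega : K ≤ m)]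
        have hsle : s N ≤ ((m + 1 - 1 - K : ℕ) : ℝ) := by
          rw [hcast]
          simp only [hsdef, htdef] at *
          nlinarith [hEH1]
        have hpow : cρ ρ ^ (m + 1 - 1 - K) ≤ Real.exp (-(s N * L)) :=
          pow_le_exp_bound hcexp hL _ hsle
        have hble : tailP ρ N (m+1) ≤ (c0ρ ρ)⁻¹ * Real.exp (-(s N * L)) := by
          calc tailP ρ N (m+1) ≤ (c0ρ ρ)⁻¹ * cρ ρ ^ (m+1-1-K) := hup
            _ ≤ (c0ρ ρ)⁻¹ * Real.exp (-(s N * L)) :=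
                mul_le_mul_of_nonneg_left hpow (by positivity)
        simp only [hgdef]
        linarith
    · -- cdfP ≤ 1 eventually
      filter_upwards [hbundle_ev, eventually_ge_atTop 1] with N hb h1
      obtain ⟨h4, K, hK1, hKN, ⟨hEH1, hEH2⟩, hlowT, hupT⟩ := hb
      set t := EH ρ N + x * φ N with htdef
      rcases lt_or_ge t 1 with ht | ht
      · rw [cdfP_of_lt_one N t ht]; norm_num
      · rw [cdfP_eval N (by omega) t ht]
        have := tailP_nonneg hρ N (min N ⌊t⌋₊ + 1)
        linarith
end

section
/- For every ρ ∈ (0,1) the equation x^x (1−x)^{1−x} = ρ^x has a unique solution x in the open interval (0,1), and this solution α satisfies ρ < α < 1. -/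
open Finset Filter Real Topology

/-- auxiliary function -/
noncomputable def ffun (ρ : ℝ) (x : ℝ) : ℝ :=
  x * Real.log x + (1 - x) * Real.log (1 - x) - x * Real.log ρ

lemma ffun_cont (ρ : ℝ) : Continuous (ffun ρ) := by
  unfold ffun
  have h1 : Continuous fun x : ℝ => x * Real.log x := Real.continuous_mul_log
  have h2 : Continuous fun x : ℝ => (1 - x) * Real.log (1 - x) :=
    h1.comp (continuous_const.sub continuous_id)
  fun_prop

lemma ffun_strictMono (ρ : ℝ) (hρ0 : 0 < ρ) (hρ1 : ρ < 1) :
    StrictMonoOn (ffun ρ) (Set.Icc ρ 1) := by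
  apply strictMonoOn_of_deriv_pos (convex_Icc ρ 1) (ffun_cont ρ).continuousOn
  intro x hx
  rw [interior_Icc] at hx
  obtain ⟨hx1, hx2⟩ := hx
  have hx0 : 0 < x := hρ0.trans hx1
  have hd : HasDerivAt (ffun ρ)
      ((Real.log x + 1) + (-(Real.log (1 - x) + 1)) - Real.log ρ) x := by
    have h1 : HasDerivAt (fun x : ℝ => x * Real.log x) (Real.log x + 1) x :=
      Real.hasDerivAt_mul_log hx0.ne'
    have h2 : HasDerivAt (fun y : ℝ => y * Real.log y) (Real.log (1 - x) + 1) (1 - x) :=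
      Real.hasDerivAt_mul_log (by linarith : (1 : ℝ) - x ≠ 0)
    have h3 : HasDerivAt (fun x : ℝ => (1 - x)) (-1 : ℝ) x := by
      simpa using (hasDerivAt_id x).const_sub 1
    have h4 : HasDerivAt (fun x : ℝ => (1 - x) * Real.log (1 - x))
        ((Real.log (1 - x) + 1) * (-1)) x := h2.comp x h3
    have h5 : HasDerivAt (fun x : ℝ => x * Real.log ρ) (Real.log ρ) x := by
      simpa using (hasDerivAt_id x).mul_const (Real.log ρ)
    have := (h1.add h4).sub h5
    exact this.congr_deriv (by ring)
  rw [hd.deriv]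
  have hlog1 : Real.log ρ < Real.log x := Real.log_lt_log hρ0 hx1
  have hlog2 : Real.log (1 - x) < 0 :=
    Real.log_neg (by linarith) (by linarith)
  linarith

lemma ffun_neg_of_le (ρ : ℝ) (hρ0 : 0 < ρ) (hρ1 : ρ < 1) {x : ℝ}
    (hx0 : 0 < x) (hxρ : x ≤ ρ) : ffun ρ x < 0 := by
  have h1 : Real.log x ≤ Real.log ρ := Real.log_le_log hx0 hxρ
  have h2 : Real.log (1 - x) < 0 :=
    Real.log_neg (by linarith) (by linarith)
  have h3 : x * Real.log x ≤ x * Real.log ρ := by nlinarith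
  have h4 : (1 - x) * Real.log (1 - x) < 0 := by nlinarith
  unfold ffun; linarith

lemma ffun_eq_zero_iff (ρ : ℝ) (hρ0 : 0 < ρ) {x : ℝ} (hx : x ∈ Set.Ioo (0 : ℝ) 1) :
    x ^ x * (1 - x) ^ (1 - x) = ρ ^ x ↔ ffun ρ x = 0 := by
  obtain ⟨hx0, hx1⟩ := hx
  rw [Real.rpow_def_of_pos hx0, Real.rpow_def_of_pos (by linarith : (0:ℝ) < 1 - x),
    Real.rpow_def_of_pos hρ0, ← Real.exp_add]
  rw [Real.exp_eq_exp]
  unfold ffun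
  constructor <;> intro h <;> linarith

theorem alpha_exists_unique (ρ : ℝ) (hρ0 : 0 < ρ) (hρ1 : ρ < 1) :
    ∃ α : ℝ, α ∈ Set.Ioo ρ 1 ∧ α ^ α * (1 - α) ^ (1 - α) = ρ ^ α ∧
      ∀ x ∈ Set.Ioo (0 : ℝ) 1, x ^ x * (1 - x) ^ (1 - x) = ρ ^ x → x = α := by
  have hfρ : ffun ρ ρ < 0 := ffun_neg_of_le ρ hρ0 hρ1 hρ0 le_rfl
  have hf1 : ffun ρ 1 = -Real.log ρ := by
    unfold ffun; simp
  have hf1pos : 0 < ffun ρ 1 := by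
    rw [hf1]
    have := Real.log_neg hρ0 hρ1
    linarith
  obtain ⟨α, hαmem, hα⟩ := intermediate_value_Icc hρ1.le (ffun_cont ρ).continuousOn
    (Set.mem_Icc.mpr ⟨hfρ.le, hf1pos.le⟩)
  have hαρ : ρ < α := lt_of_le_of_ne hαmem.1 (by rintro rfl; linarith)
  have hα1 : α < 1 := lt_of_le_of_ne hαmem.2 (by rintro rfl; linarith)
  have hαIoo : α ∈ Set.Ioo (0 : ℝ) 1 := ⟨hρ0.trans hαρ, hα1⟩
  refine ⟨α, ⟨hαρ, hα1⟩, (ffun_eq_zero_iff ρ hρ0 hαIoo).mpr hα, ?_⟩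
  intro x hx hxe
  have hfx : ffun ρ x = 0 := (ffun_eq_zero_iff ρ hρ0 hx).mp hxe
  have hxρ : ρ < x := by
    by_contra h
    push_neg at h
    exact absurd hfx (ffun_neg_of_le ρ hρ0 hρ1 hx.1 h).ne
  exact (ffun_strictMono ρ hρ0 hρ1).injOn (Set.mem_Icc.mpr ⟨hxρ.le, hx.2.le⟩)
    (Set.mem_Icc.mpr ⟨hαρ.le, hα1.le⟩) (hfx.trans hα.symm)
end

section
/- Let 0 < ρ < 1, let α ∈ (0,1) be the unique solution of x^x (1−x)^{1−x} = ρ^x, and set h_n = ⌊α(n−1)⌋. Then r_{ρ,n}(h_n) = Θ(√n): there exist constants 0 < c ≤ C and n₀ such that c√n ≤ r_{ρ,n}(h_n) ≤ C√n for all n ≥ n₀. -/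
open Finset Filter Real Topology

section AuxRfunTheta

open Stirling

noncomputable def gfun (ρ x : ℝ) : ℝ := x * Real.log ρ - x * Real.log x - (1-x) * Real.log (1-x)


lemma stirling_fact_bounds (k : ℕ) (hk : 1 ≤ k) :
    Real.sqrt π * (Real.sqrt (2*k) * ((k:ℝ)/Real.exp 1)^k) ≤ (k.factorial : ℝ) ∧
    (k.factorial : ℝ) ≤ (Real.exp 1 / Real.sqrt 2) * (Real.sqrt (2*k) * ((k:ℝ)/Real.exp 1)^k) := by
  have hk0 : (0:ℝ) < k := by exact_mod_cast hk
  have hd : (0:ℝ) < Real.sqrt (2*k) * ((k:ℝ)/Real.exp 1)^k := by positivity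
  obtain ⟨j, rfl⟩ : ∃ j, k = j + 1 := ⟨k - 1, by omega⟩
  have hlo : Real.sqrt π ≤ stirlingSeq (j+1) := by
    have ht : Tendsto (stirlingSeq ∘ Nat.succ) atTop (𝓝 (Real.sqrt π)) :=
      tendsto_stirlingSeq_sqrt_pi.comp (tendsto_add_atTop_nat 1)
    exact stirlingSeq'_antitone.le_of_tendsto ht j
  have hhi : stirlingSeq (j+1) ≤ Real.exp 1 / Real.sqrt 2 := by
    have := stirlingSeq'_antitone (Nat.zero_le j)
    simpa [Function.comp, stirlingSeq_one] using this
  simp only [stirlingSeq] at hlo hhi; rw [le_div_iff₀ hd] at hlo; rw [div_le_iff₀ hd] at hhi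
  constructor
  · push_cast at hlo ⊢; nlinarith [hlo]
  · push_cast at hhi ⊢; nlinarith [hhi]

lemma gfun_hasDeriv (ρ : ℝ) {x : ℝ} (h0 : 0 < x) (h1 : x < 1) :
    HasDerivAt (gfun ρ) (Real.log ρ - (Real.log x + 1) - (Real.log (1-x) + 1) * (-1)) x := by
  have d1 : HasDerivAt (fun y : ℝ => y * Real.log ρ) (Real.log ρ) x := by
    simpa using (hasDerivAt_id x).mul_const (Real.log ρ)
  have d2 : HasDerivAt (fun y : ℝ => y * Real.log y) (Real.log x + 1) x :=
    Real.hasDerivAt_mul_log h0.ne'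
  have d3 : HasDerivAt (fun y : ℝ => (1-y) * Real.log (1-y)) ((Real.log (1-x) + 1) * (-1)) x := by
    have h3 : HasDerivAt (fun y : ℝ => 1 - y) (-1) x := by
      simpa using (hasDerivAt_id x).const_sub 1
    exact (Real.hasDerivAt_mul_log (by linarith : (1:ℝ)-x ≠ 0)).comp x h3
  exact (d1.sub d2).sub d3

lemma gfun_lip (ρ α : ℝ) (hρ0 : 0 < ρ) (hα0 : 0 < α) (hα1 : α < 1) :
    ∀ x ∈ Set.Icc (α/2) α, |gfun ρ x - gfun ρ α| ≤
      (|Real.log ρ| + |Real.log (α/2)| + |Real.log (1-α)|) * |x - α| := by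
  intro x hx
  set B := |Real.log ρ| + |Real.log (α/2)| + |Real.log (1-α)| with hB
  have hconv : Convex ℝ (Set.Icc (α/2) α) := convex_Icc _ _
  have hmem : ∀ y ∈ Set.Icc (α/2) α, 0 < y ∧ y < 1 := fun y hy =>
    ⟨lt_of_lt_of_le (by linarith) hy.1, lt_of_le_of_lt hy.2 hα1⟩
  have hd : ∀ y ∈ Set.Icc (α/2) α, HasDerivWithinAt (gfun ρ)
      ((fun y => Real.log ρ - (Real.log y + 1) - (Real.log (1-y) + 1) * (-1)) y)
      (Set.Icc (α/2) α) y := fun y hy =>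
    (gfun_hasDeriv ρ (hmem y hy).1 (hmem y hy).2).hasDerivWithinAt
  have hbound : ∀ y ∈ Set.Icc (α/2) α,
      ‖Real.log ρ - (Real.log y + 1) - (Real.log (1-y) + 1) * (-1)‖ ≤ B := by
    intro y hy
    obtain ⟨hy0, hy1⟩ := hmem y hy
    have e1 : |Real.log y| ≤ |Real.log (α/2)| := by
      rw [abs_of_nonpos (Real.log_nonpos hy0.le hy1.le),
        abs_of_nonpos (Real.log_nonpos (by linarith) (by linarith))]
      have := Real.log_le_log (by linarith : (0:ℝ) < α/2) hy.1
      linarith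
    have e2 : |Real.log (1-y)| ≤ |Real.log (1-α)| := by
      rw [abs_of_nonpos (Real.log_nonpos (by linarith) (by linarith)),
        abs_of_nonpos (Real.log_nonpos (by linarith) (by linarith))]
      have := Real.log_le_log (by linarith : (0:ℝ) < 1-α) (by linarith [hy.2] : 1-α ≤ 1-y)
      linarith
    have : Real.log ρ - (Real.log y + 1) - (Real.log (1-y) + 1) * (-1)
        = Real.log ρ - Real.log y + Real.log (1-y) := by ring
    rw [Real.norm_eq_abs, this, hB]
    calc |Real.log ρ - Real.log y + Real.log (1-y)|
        ≤ |Real.log ρ| + |Real.log y| + |Real.log (1-y)| := by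
          calc |Real.log ρ - Real.log y + Real.log (1-y)|
              ≤ |Real.log ρ - Real.log y| + |Real.log (1-y)| := abs_add_le _ _
            _ ≤ |Real.log ρ| + |Real.log y| + |Real.log (1-y)| := by
                have := abs_sub (Real.log ρ) (Real.log y); linarith [abs_sub_abs_le_abs_sub (Real.log ρ) (Real.log y), abs_sub (Real.log ρ) (Real.log y)]
      _ ≤ _ := by linarith
  have := hconv.norm_image_sub_le_of_norm_hasDerivWithin_le hd hbound hx
    (Set.right_mem_Icc.2 (by linarith))
  rw [abs_sub_comm (gfun ρ x), abs_sub_comm x α]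
  simpa [Real.norm_eq_abs] using this

lemma exp_nat_log {c : ℝ} (hc : 0 < c) (j : ℕ) : Real.exp ((j:ℝ) * Real.log c) = c ^ j := by
  rw [Real.exp_nat_mul, Real.exp_log hc]


set_option maxHeartbeats 1000000 in
lemma key (ρ α : ℝ) (hρ0 : 0 < ρ) (hρ1 : ρ < 1) (hα0 : 0 < α) (hα1 : α < 1)
    (hsol : α * Real.log α + (1-α) * Real.log (1-α) = α * Real.log ρ) :
    ∃ a b : ℝ, 0 < a ∧ 0 < b ∧ ∃ m₀ : ℕ, 1 ≤ m₀ ∧ ∀ m : ℕ, m₀ ≤ m →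
      a / Real.sqrt m ≤ ρ ^ (⌊α * (m:ℝ)⌋₊) * (Nat.choose m ⌊α * (m:ℝ)⌋₊ : ℝ) ∧
      ρ ^ (⌊α * (m:ℝ)⌋₊) * (Nat.choose m ⌊α * (m:ℝ)⌋₊ : ℝ) ≤ b / Real.sqrt m := by
  set L : ℝ := Real.sqrt π with hL
  set U : ℝ := Real.exp 1 / Real.sqrt 2 with hU
  have hL0 : 0 < L := Real.sqrt_pos.2 Real.pi_pos
  have hU0 : 0 < U := by positivity
  set B : ℝ := |Real.log ρ| + |Real.log (α/2)| + |Real.log (1-α)| with hBdef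
  have hB0 : 0 ≤ B := by positivity
  have h1a : (0:ℝ) < 1 - α := by linarith
  have hb0 : 0 < U/L^2 * Real.sqrt (1/(α*(1-α))) * Real.exp B := by
    have h2 : (0:ℝ) < 1/(α*(1-α)) := by positivity
    exact mul_pos (mul_pos (by positivity) (Real.sqrt_pos.2 h2)) (Real.exp_pos _)
  refine ⟨L/U^2 * Real.sqrt (1/(2*α)) * Real.exp (-B),
        U/L^2 * Real.sqrt (1/(α*(1-α))) * Real.exp B, by positivity, hb0,
        max ⌈2/α⌉₊ ⌈1/(1-α)⌉₊, ?_, ?_⟩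
  · have : (1:ℝ) ≤ 2/α := by rw [le_div_iff₀ hα0]; linarith
    have : 1 ≤ ⌈2/α⌉₊ := by
      rw [Nat.one_le_ceil_iff]; positivity
    exact le_trans this (le_max_left _ _)
  intro m hm
  -- basic facts
  set h : ℕ := ⌊α * (m:ℝ)⌋₊ with hh
  have hm2α : 2/α ≤ (m:ℝ) := le_trans (Nat.le_ceil _) (by exact_mod_cast le_trans (le_max_left _ _) hm)
  have hm1α : 1/(1-α) ≤ (m:ℝ) := le_trans (Nat.le_ceil _) (by exact_mod_cast le_trans (le_max_right _ _) hm)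
  have hmR0 : (0:ℝ) < m := lt_of_lt_of_le (by positivity) hm2α
  have hαm2 : 2 ≤ α * m := by rw [div_le_iff₀ hα0] at hm2α; linarith
  have hF1 : (h:ℝ) ≤ α * m := Nat.floor_le (by positivity)
  have hF2 : α * m - 1 ≤ (h:ℝ) := by
    have := Nat.lt_floor_add_one (α * (m:ℝ)); push_cast at this ⊢; linarith
  have hh1 : 1 ≤ h := by
    have : (1:ℝ) ≤ (h:ℝ) := by linarith
    exact_mod_cast this
  have hhalf : α * m / 2 ≤ (h:ℝ) := by linarith
  have hone : 1 ≤ (1-α) * m := by rw [div_le_iff₀ (by linarith : (0:ℝ) < 1-α)] at hm1α; linarith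
  have hhm : h < m := by
    have : (h:ℝ) < m := by nlinarith
    exact_mod_cast this
  set k : ℕ := m - h with hk
  have hk1 : 1 ≤ k := by omega
  have hkR : (k:ℝ) = (m:ℝ) - (h:ℝ) := by
    rw [hk]; push_cast [Nat.cast_sub hhm.le]; ring
  have hkub : (k:ℝ) ≤ (m:ℝ) := by rw [hkR]; have : (0:ℝ) ≤ h := Nat.cast_nonneg h; linarith
  have hklb : (1-α) * m ≤ (k:ℝ) := by rw [hkR]; linarith
  have hh0R : (0:ℝ) < h := by exact_mod_cast hh1
  have hk0R : (0:ℝ) < k := by exact_mod_cast hk1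
  -- the exponential factor
  have hhk : (h:ℝ) + (k:ℝ) = (m:ℝ) := by rw [hkR]; ring
  have hEid : ρ ^ h * ((m:ℝ)^m / ((h:ℝ)^h * (k:ℝ)^k))
      = Real.exp ((m:ℝ) * gfun ρ ((h:ℝ)/(m:ℝ))) := by
    have e2 : (1:ℝ) - (h:ℝ)/(m:ℝ) = (k:ℝ)/(m:ℝ) := by field_simp; linarith
    have hinner : (m:ℝ) * gfun ρ ((h:ℝ)/(m:ℝ))
        = (h:ℝ) * Real.log ρ - (h:ℝ) * Real.log h - (k:ℝ) * Real.log k + (m:ℝ) * Real.log m := by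
      rw [gfun, e2, Real.log_div hk0R.ne' hmR0.ne', Real.log_div hh0R.ne' hmR0.ne']
      field_simp
      linear_combination Real.log (m:ℝ) * hhk
    rw [hinner]
    rw [show (h:ℝ) * Real.log ρ - (h:ℝ) * Real.log h - (k:ℝ) * Real.log k + (m:ℝ) * Real.log m
      = ((h:ℝ) * Real.log ρ + (m:ℝ) * Real.log m) - ((h:ℝ) * Real.log h + (k:ℝ) * Real.log k) by ring,
      Real.exp_sub, Real.exp_add, Real.exp_add, exp_nat_log hρ0, exp_nat_log hmR0,
      exp_nat_log hh0R, exp_nat_log hk0R]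
    field_simp
  have hgα : gfun ρ α = 0 := by rw [gfun]; linarith
  have hEbound : Real.exp (-B) ≤ ρ ^ h * ((m:ℝ)^m / ((h:ℝ)^h * (k:ℝ)^k)) ∧
      ρ ^ h * ((m:ℝ)^m / ((h:ℝ)^h * (k:ℝ)^k)) ≤ Real.exp B := by
    rw [hEid]
    have hxmem : (h:ℝ)/(m:ℝ) ∈ Set.Icc (α/2) α := by
      constructor
      · rw [le_div_iff₀ hmR0]; linarith
      · rw [div_le_iff₀ hmR0]; linarith
    have := gfun_lip ρ α hρ0 hα0 hα1 _ hxmem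
    rw [hgα, sub_zero] at this
    have hxm : (h:ℝ)/(m:ℝ) * m = h := by field_simp
    have hinvm : (1/(m:ℝ)) * m = 1 := by field_simp
    have habs : |(h:ℝ)/(m:ℝ) - α| ≤ 1/(m:ℝ) := by
      rw [abs_le]; constructor
      · nlinarith [hxm, hinvm]
      · nlinarith [hxm, hinvm, one_div_pos.2 hmR0]
    have hfull : |(m:ℝ) * gfun ρ ((h:ℝ)/(m:ℝ))| ≤ B := by
      rw [abs_mul, abs_of_pos hmR0]
      calc (m:ℝ) * |gfun ρ ((h:ℝ)/(m:ℝ))| ≤ (m:ℝ) * (B * (1/(m:ℝ))) := by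
            apply mul_le_mul_of_nonneg_left _ hmR0.le
            exact le_trans this (mul_le_mul_of_nonneg_left habs hB0)
        _ = B := by field_simp
      
    rw [abs_le] at hfull
    exact ⟨Real.exp_le_exp.2 (by linarith), Real.exp_le_exp.2 (by linarith)⟩
  -- Stirling bounds applied
  obtain ⟨hmlo, hmhi⟩ := stirling_fact_bounds m (by omega)
  obtain ⟨hhlo, hhhi⟩ := stirling_fact_bounds h hh1
  obtain ⟨hklo, hkhi⟩ := stirling_fact_bounds k hk1
  have he0 : (0:ℝ) < Real.exp 1 := Real.exp_pos 1
  have hfac : (Nat.choose m h : ℝ) = (m.factorial : ℝ) / ((h.factorial:ℝ) * (k.factorial:ℝ)) := by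
    have hc := Nat.choose_mul_factorial_mul_factorial hhm.le
    have hcast : (Nat.choose m h : ℝ) * (h.factorial:ℝ) * ((k).factorial:ℝ) = (m.factorial:ℝ) := by
      rw [hk]; exact_mod_cast congrArg Nat.cast hc
    have f1 : (0:ℝ) < (h.factorial:ℝ) := by exact_mod_cast h.factorial_pos
    have f2 : (0:ℝ) < (k.factorial:ℝ) := by exact_mod_cast k.factorial_pos
    field_simp
    linear_combination hcast
  have hek : Real.exp 1 ^ h * Real.exp 1 ^ k = Real.exp 1 ^ m := by
    rw [← pow_add]; congr 1; omega
  have key_id : (U*(Real.sqrt (2*(m:ℝ))*((m:ℝ)/Real.exp 1)^m)) /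
      ((L*(Real.sqrt (2*(h:ℝ))*((h:ℝ)/Real.exp 1)^h)) * (L*(Real.sqrt (2*(k:ℝ))*((k:ℝ)/Real.exp 1)^k)))
      = (U/L^2) * (Real.sqrt (2*(m:ℝ))/(Real.sqrt (2*(h:ℝ))*Real.sqrt (2*(k:ℝ))))
        * ((m:ℝ)^m/((h:ℝ)^h * (k:ℝ)^k)) := by
    have sh0 : (0:ℝ) < Real.sqrt (2*(h:ℝ)) := Real.sqrt_pos.2 (by positivity)
    have sk0 : (0:ℝ) < Real.sqrt (2*(k:ℝ)) := Real.sqrt_pos.2 (by positivity)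
    rw [div_pow, div_pow, div_pow, ← hek]
    field_simp
  have key_id' : (L*(Real.sqrt (2*(m:ℝ))*((m:ℝ)/Real.exp 1)^m)) /
      ((U*(Real.sqrt (2*(h:ℝ))*((h:ℝ)/Real.exp 1)^h)) * (U*(Real.sqrt (2*(k:ℝ))*((k:ℝ)/Real.exp 1)^k)))
      = (L/U^2) * (Real.sqrt (2*(m:ℝ))/(Real.sqrt (2*(h:ℝ))*Real.sqrt (2*(k:ℝ))))
        * ((m:ℝ)^m/((h:ℝ)^h * (k:ℝ)^k)) := by
    have sh0 : (0:ℝ) < Real.sqrt (2*(h:ℝ)) := Real.sqrt_pos.2 (by positivity)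
    have sk0 : (0:ℝ) < Real.sqrt (2*(k:ℝ)) := Real.sqrt_pos.2 (by positivity)
    rw [div_pow, div_pow, div_pow, ← hek]
    field_simp
  -- bounds on the sqrt ratio T
  have hTeq : Real.sqrt (2*(m:ℝ))/(Real.sqrt (2*(h:ℝ))*Real.sqrt (2*(k:ℝ)))
      = Real.sqrt ((2*(m:ℝ))/((2*(h:ℝ))*(2*(k:ℝ)))) := by
    rw [← Real.sqrt_mul (by positivity : (0:ℝ) ≤ 2*(h:ℝ)),
      ← Real.sqrt_div (by positivity : (0:ℝ) ≤ 2*(m:ℝ))]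
  have hT_hi : Real.sqrt (2*(m:ℝ))/(Real.sqrt (2*(h:ℝ))*Real.sqrt (2*(k:ℝ)))
      ≤ Real.sqrt (1/(α*(1-α))) / Real.sqrt (m:ℝ) := by
    rw [hTeq, ← Real.sqrt_div (by positivity)]
    apply Real.sqrt_le_sqrt
    have hprod : (α*(m:ℝ)/2) * ((1-α)*(m:ℝ)) ≤ (h:ℝ)*(k:ℝ) :=
      mul_le_mul hhalf hklb (by positivity) hh0R.le
    rw [div_le_div_iff₀ (by positivity) (by positivity)]
    have h4 : 2*(m:ℝ)*(m:ℝ)*(α*(1-α)) ≤ (2*(h:ℝ))*(2*(k:ℝ)) := by linarith [hprod]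
    calc 2*(m:ℝ)*(m:ℝ) = (2*(m:ℝ)*(m:ℝ)*(α*(1-α))) * (1/(α*(1-α))) := by field_simp
      _ ≤ ((2*(h:ℝ))*(2*(k:ℝ))) * (1/(α*(1-α))) := mul_le_mul_of_nonneg_right h4 (by positivity)
      _ = 1/(α*(1-α)) * ((2*(h:ℝ))*(2*(k:ℝ))) := by ring
  have hT_lo : Real.sqrt (1/(2*α)) / Real.sqrt (m:ℝ)
      ≤ Real.sqrt (2*(m:ℝ))/(Real.sqrt (2*(h:ℝ))*Real.sqrt (2*(k:ℝ))) := by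
    rw [hTeq, ← Real.sqrt_div (by positivity)]
    apply Real.sqrt_le_sqrt
    have hprod2 : (h:ℝ)*(k:ℝ) ≤ (α*(m:ℝ))*(m:ℝ) :=
      mul_le_mul hF1 hkub hk0R.le (by positivity)
    rw [div_le_div_iff₀ (by positivity) (by positivity)]
    have h5 : (2*(h:ℝ))*(2*(k:ℝ)) ≤ 2*(m:ℝ)*(m:ℝ)*(2*α) := by linarith [hprod2]
    calc 1/(2*α) * ((2*(h:ℝ))*(2*(k:ℝ))) ≤ 1/(2*α) * (2*(m:ℝ)*(m:ℝ)*(2*α)) :=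
        mul_le_mul_of_nonneg_left h5 (by positivity)
      _ = 2*(m:ℝ)*(m:ℝ) := by field_simp
  constructor
  · calc (L/U^2 * Real.sqrt (1/(2*α)) * Real.exp (-B)) / Real.sqrt (m:ℝ)
        = (L/U^2) * (Real.sqrt (1/(2*α)) / Real.sqrt (m:ℝ)) * Real.exp (-B) := by ring
      _ ≤ (L/U^2) * (Real.sqrt (2*(m:ℝ))/(Real.sqrt (2*(h:ℝ))*Real.sqrt (2*(k:ℝ))))
            * (ρ ^ h * ((m:ℝ)^m/((h:ℝ)^h * (k:ℝ)^k))) := by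
          apply mul_le_mul (mul_le_mul_of_nonneg_left hT_lo (by positivity)) hEbound.1
            (Real.exp_pos _).le
          positivity
      _ = (L*(Real.sqrt (2*(m:ℝ))*((m:ℝ)/Real.exp 1)^m)) /
            ((U*(Real.sqrt (2*(h:ℝ))*((h:ℝ)/Real.exp 1)^h)) * (U*(Real.sqrt (2*(k:ℝ))*((k:ℝ)/Real.exp 1)^k)))
            * ρ ^ h := by rw [key_id']; ring
      _ ≤ ((m.factorial : ℝ) / ((h.factorial:ℝ) * (k.factorial:ℝ))) * ρ ^ h := by
          apply mul_le_mul_of_nonneg_right _ (by positivity)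
          apply div_le_div₀ (by positivity) hmlo (by positivity)
          exact mul_le_mul hhhi hkhi (by positivity) (by positivity)
      _ = ρ ^ h * (Nat.choose m h : ℝ) := by rw [hfac]; ring
  · calc ρ ^ h * (Nat.choose m h : ℝ)
        = ((m.factorial : ℝ) / ((h.factorial:ℝ) * (k.factorial:ℝ))) * ρ ^ h := by rw [hfac]; ring
      _ ≤ (U*(Real.sqrt (2*(m:ℝ))*((m:ℝ)/Real.exp 1)^m)) /
            ((L*(Real.sqrt (2*(h:ℝ))*((h:ℝ)/Real.exp 1)^h)) * (L*(Real.sqrt (2*(k:ℝ))*((k:ℝ)/Real.exp 1)^k)))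
            * ρ ^ h := by
          apply mul_le_mul_of_nonneg_right _ (by positivity)
          apply div_le_div₀ (by positivity) hmhi (by positivity)
          exact mul_le_mul hhlo hklo (by positivity) (by positivity)
      _ = (U/L^2) * (Real.sqrt (2*(m:ℝ))/(Real.sqrt (2*(h:ℝ))*Real.sqrt (2*(k:ℝ))))
            * (ρ ^ h * ((m:ℝ)^m/((h:ℝ)^h * (k:ℝ)^k))) := by rw [key_id]; ring
      _ ≤ (U/L^2) * (Real.sqrt (1/(α*(1-α))) / Real.sqrt (m:ℝ)) * Real.exp B := by
          apply mul_le_mul (mul_le_mul_of_nonneg_left hT_hi (by positivity)) hEbound.2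
            (by positivity) (by positivity)
      _ = (U/L^2 * Real.sqrt (1/(α*(1-α))) * Real.exp B) / Real.sqrt (m:ℝ) := by ring

end AuxRfunTheta

theorem rfun_at_floor_theta_sqrt (ρ α : ℝ) (hρ0 : 0 < ρ) (hρ1 : ρ < 1)
    (hα : α ∈ Set.Ioo (0 : ℝ) 1)
    (hsol : α ^ α * (1 - α) ^ (1 - α) = ρ ^ α)
    (huniq : ∀ x ∈ Set.Ioo (0 : ℝ) 1, x ^ x * (1 - x) ^ (1 - x) = ρ ^ x → x = α) :
    ∃ c C : ℝ, ∃ n₀ : ℕ, 0 < c ∧ c ≤ C ∧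
      ∀ n : ℕ, n₀ ≤ n →
        c * Real.sqrt n ≤ rfun ρ n ⌊α * ((n : ℝ) - 1)⌋₊ ∧
        rfun ρ n ⌊α * ((n : ℝ) - 1)⌋₊ ≤ C * Real.sqrt n := by
  obtain ⟨hα0, hα1⟩ := hα
  have h1a : (0:ℝ) < 1 - α := by linarith
  have hlog : α * Real.log α + (1-α) * Real.log (1-α) = α * Real.log ρ := by
    have hcongr := congrArg Real.log hsol
    rwa [Real.log_mul (Real.rpow_pos_of_pos hα0 α).ne' (Real.rpow_pos_of_pos h1a (1-α)).ne',
      Real.log_rpow hα0, Real.log_rpow h1a, Real.log_rpow hρ0] at hcongr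
  obtain ⟨a, b, ha0, hb0, m₀, hm₀1, hkey⟩ := key ρ α hρ0 hρ1 hα0 hα1 hlog
  have hab : a ≤ b := by
    obtain ⟨h1, h2⟩ := hkey m₀ le_rfl
    have hs : (0:ℝ) < Real.sqrt m₀ := Real.sqrt_pos.2 (by exact_mod_cast hm₀1)
    have := le_trans h1 h2
    rw [div_le_div_iff₀ hs hs] at this
    nlinarith [hs]
  have hs2 : (1:ℝ) ≤ Real.sqrt 2 := by
    rw [show (1:ℝ) = Real.sqrt 1 from Real.sqrt_one.symm]
    exact Real.sqrt_le_sqrt (by norm_num)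
  refine ⟨(Real.sqrt 2 * b)⁻¹, a⁻¹, m₀ + 2, by positivity, ?_, ?_⟩
  · apply inv_anti₀ ha0
    nlinarith
  intro n hn
  have hn2 : 2 ≤ n := by omega
  set m : ℕ := n - 1 with hmdef
  have hmm : m₀ ≤ m := by omega
  have hm1 : 1 ≤ m := by omega
  have hcast : (n : ℝ) - 1 = (m : ℝ) := by
    rw [hmdef]; push_cast [Nat.cast_sub (by omega : 1 ≤ n)]; ring
  have hrw : rfun ρ n ⌊α * ((n : ℝ) - 1)⌋₊
      = (ρ ^ (⌊α * (m:ℝ)⌋₊) * (Nat.choose m ⌊α * (m:ℝ)⌋₊ : ℝ))⁻¹ := by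
    rw [rfun, hcast]
  obtain ⟨h1, h2⟩ := hkey m hmm
  have hsm : (0:ℝ) < Real.sqrt m := Real.sqrt_pos.2 (by exact_mod_cast hm1)
  have hsn : (0:ℝ) < Real.sqrt n := Real.sqrt_pos.2 (by exact_mod_cast (by omega : 0 < n))
  have hX0 : (0:ℝ) < ρ ^ (⌊α * (m:ℝ)⌋₊) * (Nat.choose m ⌊α * (m:ℝ)⌋₊ : ℝ) :=
    lt_of_lt_of_le (by positivity) h1
  have hmn : Real.sqrt m ≤ Real.sqrt n := Real.sqrt_le_sqrt (by exact_mod_cast Nat.sub_le n 1)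
  have hnm : Real.sqrt n ≤ Real.sqrt 2 * Real.sqrt m := by
    rw [← Real.sqrt_mul (by norm_num)]
    apply Real.sqrt_le_sqrt
    have hn2R : (2:ℝ) ≤ n := by exact_mod_cast hn2
    linarith [hcast]
  constructor
  · rw [hrw]
    calc (Real.sqrt 2 * b)⁻¹ * Real.sqrt n
        ≤ (Real.sqrt 2 * b)⁻¹ * (Real.sqrt 2 * Real.sqrt m) :=
          mul_le_mul_of_nonneg_left hnm (by positivity)
      _ = (b / Real.sqrt m)⁻¹ := by
          rw [inv_div]; field_simp
      _ ≤ _ := inv_anti₀ hX0 h2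
  · rw [hrw]
    calc (ρ ^ (⌊α * (m:ℝ)⌋₊) * (Nat.choose m ⌊α * (m:ℝ)⌋₊ : ℝ))⁻¹
        ≤ (a / Real.sqrt m)⁻¹ := inv_anti₀ (by positivity) h1
      _ = Real.sqrt m * a⁻¹ := by rw [inv_div]; ring
      _ ≤ Real.sqrt n * a⁻¹ := mul_le_mul_of_nonneg_right hmn (by positivity)
      _ = a⁻¹ * Real.sqrt n := mul_comm _ _
end

section
/- Let 0 < ρ < 1, let α ∈ (0,1) be the unique solution of x^x (1−x)^{1−x} = ρ^x, set h_n = ⌊α(n−1)⌋ and C₂ = 3/(log α − log ρ). Then for all sufficiently large n, r_{ρ,n}(h_n − ⌊C₂ log n⌋) ≤ r_{ρ,n}(h_n) · n^{−3}. -/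
open Finset Filter Real Topology

lemma choose_ratio_bound (N k : ℕ) (β : ℝ) (hβ : 0 ≤ β) :
    ∀ m : ℕ, k + m ≤ N →
      (∀ i : ℕ, k ≤ i → i < k + m → (N : ℝ) - (i : ℝ) ≤ β * ((i : ℝ) + 1)) →
      ((N.choose (k + m) : ℕ) : ℝ) ≤ β ^ m * (N.choose k : ℝ) := by
  intro m
  induction m with
  | zero => simp
  | succ m ih =>
    intro hle hfac
    have hle' : k + m ≤ N := by omega
    have h1 := ih hle' (fun i hi hi' => hfac i hi (by omega))
    have hfac' := hfac (k + m) (by omega) (by omega)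
    have hid : ((N.choose (k + m + 1) : ℕ) : ℝ) * ((k + m : ℕ) + 1) =
        ((N.choose (k + m) : ℕ) : ℝ) * ((N : ℝ) - ((k + m : ℕ) : ℝ)) := by
      have h2 := Nat.choose_succ_right_eq N (k + m)
      have h3 : ((N - (k + m) : ℕ) : ℝ) = (N : ℝ) - ((k + m : ℕ) : ℝ) := by
        rw [Nat.cast_sub hle']
      calc ((N.choose (k + m + 1) : ℕ) : ℝ) * ((k + m : ℕ) + 1)
          = ((N.choose (k + m + 1) * (k + m + 1) : ℕ) : ℝ) := by push_cast; ring
        _ = ((N.choose (k + m) * (N - (k + m)) : ℕ) : ℝ) := by rw [h2]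
        _ = _ := by rw [Nat.cast_mul, h3]
    have hcpos : (0 : ℝ) ≤ ((N.choose (k + m) : ℕ) : ℝ) := by positivity
    have hkm1 : (0 : ℝ) < ((k + m : ℕ) : ℝ) + 1 := by positivity
    have t1 : ((N.choose (k + m) : ℕ) : ℝ) * ((N : ℝ) - ((k + m : ℕ) : ℝ)) ≤
        ((N.choose (k + m) : ℕ) : ℝ) * (β * (((k + m : ℕ) : ℝ) + 1)) :=
      mul_le_mul_of_nonneg_left hfac' hcpos
    have t2 : ((N.choose (k + m) : ℕ) : ℝ) * (β * (((k + m : ℕ) : ℝ) + 1)) ≤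
        (β ^ m * (N.choose k : ℝ)) * (β * (((k + m : ℕ) : ℝ) + 1)) := by
      apply mul_le_mul_of_nonneg_right h1 (by positivity)
    have t3 : ((N.choose (k + m + 1) : ℕ) : ℝ) * (((k + m : ℕ) : ℝ) + 1) ≤
        (β ^ (m + 1) * (N.choose k : ℝ)) * (((k + m : ℕ) : ℝ) + 1) := by
      rw [hid]
      calc _ ≤ (β ^ m * (N.choose k : ℝ)) * (β * (((k + m : ℕ) : ℝ) + 1)) := t1.trans t2
        _ = (β ^ (m + 1) * (N.choose k : ℝ)) * (((k + m : ℕ) : ℝ) + 1) := by ring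
    exact le_of_mul_le_mul_right t3 hkm1

lemma ev_log_linear (a b dd : ℝ) (hdd : 0 < dd) :
    ∀ᶠ n : ℕ in atTop, a + b * Real.log n ≤ dd * ((n : ℝ) - 1) := by
  have hb1 : (0 : ℝ) < |b| + 1 := by positivity
  set ε : ℝ := dd / (2 * (|b| + 1)) with hε
  have hε0 : 0 < ε := by positivity
  have h1 : ∀ᶠ x : ℝ in atTop, ‖Real.log x‖ ≤ ε * ‖id x‖ :=
    Real.isLittleO_log_id_atTop.def hε0
  have h2 := tendsto_natCast_atTop_atTop (R := ℝ) |>.eventually h1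
  have h3 : ∀ᶠ n : ℕ in atTop, a + dd ≤ (dd / 2) * (n : ℝ) := by
    have ht : Tendsto (fun n : ℕ => (dd / 2) * (n : ℝ)) atTop atTop :=
      (tendsto_natCast_atTop_atTop (R := ℝ)).const_mul_atTop (by positivity)
    exact ht.eventually_ge_atTop (a + dd)
  filter_upwards [h2, h3, eventually_ge_atTop 1] with n hn1 hn2 hn3
  have hnR : (1 : ℝ) ≤ (n : ℝ) := by exact_mod_cast hn3
  have hlg0 : 0 ≤ Real.log n := Real.log_nonneg hnR
  have hn1' : Real.log n ≤ ε * (n : ℝ) := by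
    simpa [Real.norm_eq_abs, abs_of_nonneg hlg0, abs_of_nonneg (by linarith : (0:ℝ) ≤ (n:ℝ))]
      using hn1
  have hblog : b * Real.log n ≤ |b| * (ε * (n : ℝ)) := by
    calc b * Real.log n ≤ |b| * Real.log n := by
          apply mul_le_mul_of_nonneg_right (le_abs_self b) hlg0
      _ ≤ |b| * (ε * (n : ℝ)) := mul_le_mul_of_nonneg_left hn1' (abs_nonneg b)
  have hbe : |b| * ε ≤ dd / 2 := by
    have h := abs_nonneg b
    rw [hε, ← mul_div_assoc, div_le_div_iff₀ (by positivity) (by norm_num : (0:ℝ) < 2)]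
    nlinarith
  have hbe' : |b| * (ε * (n : ℝ)) ≤ (dd / 2) * (n : ℝ) := by
    rw [← mul_assoc]
    exact mul_le_mul_of_nonneg_right hbe (by linarith)
  linarith

theorem rfun_below_peak (ρ α C₂ : ℝ) (hρ0 : 0 < ρ) (hρ1 : ρ < 1)
    (hα : α ∈ Set.Ioo (0 : ℝ) 1)
    (hsol : α ^ α * (1 - α) ^ (1 - α) = ρ ^ α)
    (huniq : ∀ x ∈ Set.Ioo (0 : ℝ) 1, x ^ x * (1 - x) ^ (1 - x) = ρ ^ x → x = α)
    (hC₂ : C₂ = 3 / (Real.log α - Real.log ρ)) :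
    ∀ᶠ n : ℕ in atTop,
      rfun ρ n (⌊α * ((n : ℝ) - 1)⌋₊ - ⌊C₂ * Real.log n⌋₊) ≤
        rfun ρ n ⌊α * ((n : ℝ) - 1)⌋₊ * ((n : ℝ) ^ 3)⁻¹ := by
  obtain ⟨hα0, hα1⟩ := hα
  -- ρ < α
  have hρα : ρ < α := by
    by_contra hcon
    push_neg at hcon
    have h1 : α ^ α ≤ ρ ^ α := Real.rpow_le_rpow hα0.le hcon hα0.le
    have h2 : (1 - α) ^ (1 - α) < 1 :=
      Real.rpow_lt_one (by linarith) (by linarith) (by linarith)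
    have hpos : (0 : ℝ) < α ^ α := Real.rpow_pos_of_pos hα0 α
    nlinarith [hsol]
  set β : ℝ := (1 - α / 2) / α with hβdef
  have hβ0 : 0 < β := div_pos (by linarith) hα0
  have hL0 : 0 < Real.log α - Real.log ρ := by
    have := Real.log_lt_log hρ0 hρα
    linarith
  set L : ℝ := Real.log α - Real.log ρ with hLdef
  set d : ℝ := -Real.log (1 - α / 2) with hddef
  have hd0 : 0 < d := by
    have : Real.log (1 - α / 2) < 0 := Real.log_neg (by linarith) (by linarith)
    simp only [hddef]; linarith
  have hC₂0 : 0 < C₂ := by rw [hC₂]; positivity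
  have hαβ : α * β = 1 - α / 2 := by
    rw [hβdef]; field_simp
  have hρβ0 : 0 < ρ * β := mul_pos hρ0 hβ0
  have hρβ1 : ρ * β < 1 := by
    have h1 : ρ * β < α * β := mul_lt_mul_of_pos_right hρα hβ0
    rw [hαβ] at h1; linarith
  have hlogρβ : Real.log (ρ * β) = -(L + d) := by
    rw [Real.log_mul (ne_of_gt hρ0) (ne_of_gt hβ0), hβdef,
      Real.log_div (by linarith) (ne_of_gt hα0)]
    simp only [hLdef, hddef]; ring
  -- eventual facts
  have ev2 := ev_log_linear 1 C₂ α hα0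
  have ev3 := ev_log_linear (β + 1) ((β + 1) * C₂) (α / 2) (by linarith)
  have ev4 : ∀ᶠ n : ℕ in atTop, (L + d) * L / (3 * d) ≤ Real.log n :=
    (Real.tendsto_log_atTop.comp (tendsto_natCast_atTop_atTop (R := ℝ))).eventually_ge_atTop _
  filter_upwards [ev2, ev3, ev4, eventually_ge_atTop 2] with n hc2 hc3 hc4 hn2
  simp only [rfun]
  have hnR : (2 : ℝ) ≤ (n : ℝ) := by exact_mod_cast hn2
  have hlg0 : 0 ≤ Real.log n := Real.log_nonneg (by linarith)
  set N : ℕ := n - 1 with hNdef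
  have hN : (N : ℝ) = (n : ℝ) - 1 := by
    rw [hNdef, Nat.cast_sub (by omega)]; norm_num
  set km : ℕ := ⌊C₂ * Real.log n⌋₊ with hkmdef
  set kh : ℕ := ⌊α * ((n : ℝ) - 1)⌋₊ with hkhdef
  have hmle : (km : ℝ) ≤ C₂ * Real.log n := Nat.floor_le (by positivity)
  have hmgt : C₂ * Real.log n - 1 < (km : ℝ) := Nat.sub_one_lt_floor _
  have hhle : (kh : ℝ) ≤ α * ((n : ℝ) - 1) :=
    Nat.floor_le (by nlinarith)
  have hhgt : α * ((n : ℝ) - 1) - 1 < (kh : ℝ) := Nat.sub_one_lt_floor _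
  have hmh : km ≤ kh := by
    have : (km : ℝ) < (kh : ℝ) := by linarith
    exact_mod_cast this.le
  have hhN : kh ≤ N := by
    have : (kh : ℝ) ≤ (N : ℝ) := by rw [hN]; nlinarith
    exact_mod_cast this
  have hcast_hm : ((kh - km : ℕ) : ℝ) = (kh : ℝ) - (km : ℝ) := by
    rw [Nat.cast_sub hmh]
  -- key combinatorial bound
  have hfac : ∀ i : ℕ, kh - km ≤ i → i < (kh - km) + km →
      (N : ℝ) - (i : ℝ) ≤ β * ((i : ℝ) + 1) := by
    intro i hi1 _
    have hiR : (kh : ℝ) - (km : ℝ) ≤ (i : ℝ) := by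
      rw [← hcast_hm]; exact_mod_cast hi1
    have hx0 : α * ((n : ℝ) - 1) - 1 - C₂ * Real.log n ≤ (i : ℝ) := by linarith
    have ht1 : β * (α * ((n : ℝ) - 1) - C₂ * Real.log n) ≤ β * ((i : ℝ) + 1) :=
      mul_le_mul_of_nonneg_left (by linarith) hβ0.le
    have hexp : β * (α * ((n : ℝ) - 1) - C₂ * Real.log n) =
        (1 - α / 2) * ((n : ℝ) - 1) - β * (C₂ * Real.log n) := by
      rw [mul_sub]
      have : β * (α * ((n : ℝ) - 1)) = (1 - α / 2) * ((n : ℝ) - 1) := by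
        rw [← mul_assoc, mul_comm β α, hαβ]
      rw [this]
    rw [hexp] at ht1
    rw [hN]
    linarith [hβ0.le, hc3, hx0, ht1]
  have hsum : (kh - km) + km = kh := Nat.sub_add_cancel hmh
  have hkey : ((N.choose kh : ℕ) : ℝ) ≤ β ^ km * (N.choose (kh - km) : ℝ) := by
    have := choose_ratio_bound N (kh - km) β hβ0.le km (by omega) hfac
    rwa [hsum] at this
  -- positivity
  have hch : (0 : ℝ) < (N.choose kh : ℝ) := by
    exact_mod_cast Nat.choose_pos hhN
  have hchm : (0 : ℝ) < (N.choose (kh - km) : ℝ) := by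
    exact_mod_cast Nat.choose_pos (le_trans (Nat.sub_le kh km) hhN)
  have hA : 0 < ρ ^ (kh - km) * ((N.choose (kh - km) : ℕ) : ℝ) :=
    mul_pos (pow_pos hρ0 _) hchm
  have hB : 0 < ρ ^ kh * ((N.choose kh : ℕ) : ℝ) := mul_pos (pow_pos hρ0 _) hch
  have hn0 : (0 : ℝ) < (n : ℝ) := by linarith
  have hn3 : (0 : ℝ) < (n : ℝ) ^ 3 := by positivity
  -- final numeric bound
  have hfinal : (ρ * β) ^ km * (n : ℝ) ^ 3 ≤ 1 := by
    have hexp1 : (ρ * β) ^ km = Real.exp ((km : ℝ) * Real.log (ρ * β)) := by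
      rw [← Real.log_pow, Real.exp_log (pow_pos hρβ0 km)]
    have hexp2 : (n : ℝ) ^ 3 = Real.exp (3 * Real.log n) := by
      rw [show (3 : ℝ) * Real.log n = ((3 : ℕ) : ℝ) * Real.log n by norm_num,
        ← Real.log_pow, Real.exp_log (by positivity)]
    rw [hexp1, hexp2, ← Real.exp_add, Real.exp_le_one_iff, hlogρβ]
    have hLd0 : (0 : ℝ) < L + d := by linarith
    have h34 : (L + d) * L ≤ Real.log n * (3 * d) := (div_le_iff₀ (by positivity)).mp hc4
    have hmL : 3 * Real.log n - L ≤ (km : ℝ) * L := by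
      have h1 : (C₂ * Real.log n - 1) * L ≤ (km : ℝ) * L :=
        mul_le_mul_of_nonneg_right hmgt.le hL0.le
      have h2 : (C₂ * Real.log n - 1) * L = 3 * Real.log n - L := by
        rw [hC₂]; field_simp
      linarith
    have hh := mul_le_mul_of_nonneg_right hmL hLd0.le
    have h7 : (3 * Real.log n) * L ≤ ((km : ℝ) * (L + d)) * L := by linarith [hh, h34]
    have hfin : 3 * Real.log n ≤ (km : ℝ) * (L + d) := le_of_mul_le_mul_right h7 hL0
    linarith [hfin]
  -- assemble
  rw [← mul_inv]
  apply inv_anti₀ (by positivity)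
  have hpow : ρ ^ kh = ρ ^ (kh - km) * ρ ^ km := by
    rw [← pow_add]; congr 1; omega
  calc ρ ^ kh * ((N.choose kh : ℕ) : ℝ) * (n : ℝ) ^ 3
      ≤ ρ ^ kh * (β ^ km * ((N.choose (kh - km) : ℕ) : ℝ)) * (n : ℝ) ^ 3 := by
        apply mul_le_mul_of_nonneg_right
          (mul_le_mul_of_nonneg_left hkey (pow_pos hρ0 kh).le) hn3.le
    _ = (ρ ^ (kh - km) * ((N.choose (kh - km) : ℕ) : ℝ)) * ((ρ * β) ^ km * (n : ℝ) ^ 3) := by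
        rw [hpow, mul_pow]; ring
    _ ≤ (ρ ^ (kh - km) * ((N.choose (kh - km) : ℕ) : ℝ)) * 1 :=
        mul_le_mul_of_nonneg_left hfinal hA.le
    _ = ρ ^ (kh - km) * ((N.choose (kh - km) : ℕ) : ℝ) := mul_one _
end

section
/- Let 0 < ρ < 1, let α ∈ (0,1) be the unique solution of x^x (1−x)^{1−x} = ρ^x, set h_N = ⌊α(N−1)⌋ and C₂ = 3/(log α − log ρ). Then for all sufficiently large N, P(H_N ≥ h_N − ⌊C₂ log N⌋) ≥ 1 − (3+ρ)/((N−1)ρ²). -/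
open Finset Filter Real Topology

/-! ### Auxiliary lemmas -/

lemma chain_le_aux {β : Type*} [Preorder β] (u : ℕ → β) :
    ∀ b a, a ≤ b → (∀ l, a ≤ l → l < b → u l ≤ u (l + 1)) → u a ≤ u b := by
  intro b
  induction b with
  | zero => intro a ha _; simp [Nat.le_zero.mp ha]
  | succ n ih =>
    intro a ha h
    rcases Nat.lt_or_ge a (n + 1) with h' | h'
    · have han : a ≤ n := Nat.lt_succ_iff.mp h'
      exact le_trans (ih a han fun l hl hln => h l hl (Nat.lt_succ_of_lt hln))
        (h n han (Nat.lt_succ_self n))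
    · have : a = n + 1 := le_antisymm ha h'
      subst this; exact le_rfl

lemma chain_ge_aux {β : Type*} [Preorder β] (u : ℕ → β) (b a : ℕ) (hab : a ≤ b)
    (h : ∀ l, a ≤ l → l < b → u (l + 1) ≤ u l) : u b ≤ u a :=
  chain_le_aux (β := βᵒᵈ) u b a hab h

/-- Max-term bound: `m^m ≤ (m+1) * C(m,j) * j^j * (m-j)^(m-j)`. -/
lemma nat_entropy_bound (m j : ℕ) (hj : j ≤ m) :
    m ^ m ≤ (m + 1) * (m.choose j * j ^ j * (m - j) ^ (m - j)) := by
  set t : ℕ → ℕ := fun i => m.choose i * j ^ i * (m - j) ^ (m - i) with ht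
  have hsum : ∑ i ∈ Finset.range (m + 1), t i = m ^ m := by
    have := add_pow j (m - j) m
    rw [Nat.add_sub_cancel' hj] at this
    simpa [ht, mul_comm, mul_assoc, mul_left_comm] using this.symm
  have hup : ∀ i, i + 1 ≤ j → t i ≤ t (i + 1) := by
    intro i hij
    have him : i < m := lt_of_lt_of_le hij hj
    have hmi : m - i = (m - i - 1) + 1 := by omega
    have key : m.choose i * (m - j) ≤ m.choose (i + 1) * j := by
      have hc := Nat.choose_succ_right_eq m i
      have h1 : (m - j) * (i + 1) ≤ (m - i) * j := by
        calc (m - j) * (i + 1) ≤ (m - j) * j := Nat.mul_le_mul_left _ hij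
          _ ≤ (m - i) * j := Nat.mul_le_mul_right _
              (Nat.sub_le_sub_left (le_of_lt (lt_of_lt_of_le (Nat.lt_succ_self i) hij)) m)
      have : m.choose i * (m - j) * (i + 1) ≤ m.choose (i + 1) * j * (i + 1) := by
        calc m.choose i * (m - j) * (i + 1) = m.choose i * ((m - j) * (i + 1)) := by ring
          _ ≤ m.choose i * ((m - i) * j) := Nat.mul_le_mul_left _ h1
          _ = (m.choose i * (m - i)) * j := by ring
          _ = (m.choose (i + 1) * (i + 1)) * j := by rw [hc]
          _ = m.choose (i + 1) * j * (i + 1) := by ring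
      exact Nat.le_of_mul_le_mul_right this (Nat.succ_pos i)
    calc t i = m.choose i * j ^ i * ((m - j) ^ (m - i - 1) * (m - j)) := by
          rw [ht]; simp only []; rw [hmi, pow_succ]; simp
      _ = (m.choose i * (m - j)) * (j ^ i * (m - j) ^ (m - i - 1)) := by ring
      _ ≤ (m.choose (i + 1) * j) * (j ^ i * (m - j) ^ (m - i - 1)) := Nat.mul_le_mul_right _ key
      _ = m.choose (i + 1) * j ^ (i + 1) * (m - j) ^ (m - (i + 1)) := by
          have : m - (i + 1) = m - i - 1 := by omega
          rw [this]; ring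
  have hdown : ∀ i, j ≤ i → i + 1 ≤ m → t (i + 1) ≤ t i := by
    intro i hji him
    have hmi : m - i = (m - i - 1) + 1 := by omega
    have key : m.choose (i + 1) * j ≤ m.choose i * (m - j) := by
      have hc := Nat.choose_succ_right_eq m i
      have h1 : (m - i) * j ≤ (m - j) * (i + 1) := by
        calc (m - i) * j ≤ (m - j) * j := Nat.mul_le_mul_right _ (Nat.sub_le_sub_left hji m)
          _ ≤ (m - j) * (i + 1) := Nat.mul_le_mul_left _ (le_trans hji (Nat.le_succ i))
      have : m.choose (i + 1) * j * (i + 1) ≤ m.choose i * (m - j) * (i + 1) := by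
        calc m.choose (i + 1) * j * (i + 1) = (m.choose (i + 1) * (i + 1)) * j := by ring
          _ = (m.choose i * (m - i)) * j := by rw [hc]
          _ = m.choose i * ((m - i) * j) := by ring
          _ ≤ m.choose i * ((m - j) * (i + 1)) := Nat.mul_le_mul_left _ h1
          _ = m.choose i * (m - j) * (i + 1) := by ring
      exact Nat.le_of_mul_le_mul_right this (Nat.succ_pos i)
    calc t (i + 1) = m.choose (i + 1) * j ^ (i + 1) * (m - j) ^ (m - (i + 1)) := rfl
      _ = (m.choose (i + 1) * j) * (j ^ i * (m - j) ^ (m - i - 1)) := by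
          have : m - (i + 1) = m - i - 1 := by omega
          rw [this]; ring
      _ ≤ (m.choose i * (m - j)) * (j ^ i * (m - j) ^ (m - i - 1)) := Nat.mul_le_mul_right _ key
      _ = m.choose i * j ^ i * ((m - j) ^ (m - i - 1) * (m - j)) := by ring
      _ = t i := by rw [ht]; simp only []; rw [hmi, pow_succ]; simp
  have hmax : ∀ i ∈ Finset.range (m + 1), t i ≤ t j := by
    intro i hi
    rw [Finset.mem_range, Nat.lt_succ_iff] at hi
    rcases le_or_gt i j with h | h
    · exact chain_le_aux t j i h fun l _ hlj => hup l hlj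
    · exact chain_ge_aux t i j (le_of_lt h) fun l hl hli => hdown l hl (le_trans hli hi)
  calc m ^ m = ∑ i ∈ Finset.range (m + 1), t i := hsum.symm
    _ ≤ ∑ _i ∈ Finset.range (m + 1), t j := Finset.sum_le_sum hmax
    _ = (m + 1) * t j := by rw [Finset.sum_const, Finset.card_range, smul_eq_mul]

lemma poly_beats_log (D E F : ℝ) (hF : 0 < F) :
    ∀ᶠ N : ℕ in atTop, D * Real.log N + E ≤ F * ((N : ℝ) - 1) := by
  set c : ℝ := F / (2 * (|D| + 1)) with hc_def
  have hc : (0:ℝ) < c := by positivity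
  have h1 := Real.isLittleO_log_id_atTop.def hc
  have h2 : Tendsto (fun N : ℕ => (N : ℝ)) atTop atTop := tendsto_natCast_atTop_atTop
  have h3 := h2.eventually h1
  have h4 : ∀ᶠ N : ℕ in atTop, E + F ≤ (F / 2) * (N : ℝ) := by
    have : Tendsto (fun N : ℕ => (F / 2) * (N : ℝ)) atTop atTop :=
      (h2.const_mul_atTop (half_pos hF))
    exact this.eventually_ge_atTop _
  filter_upwards [h3, h4] with N hN1 hN2
  have hN0 : (0:ℝ) ≤ (N:ℝ) := Nat.cast_nonneg N
  simp only [Real.norm_eq_abs, id_eq] at hN1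
  have habsN : |(N:ℝ)| = (N:ℝ) := abs_of_nonneg hN0
  rw [habsN] at hN1
  have hD1 : D * Real.log N ≤ |D| * (c * (N:ℝ)) := by
    calc D * Real.log N ≤ |D * Real.log N| := le_abs_self _
      _ = |D| * |Real.log N| := abs_mul _ _
      _ ≤ |D| * (c * (N:ℝ)) := mul_le_mul_of_nonneg_left hN1 (abs_nonneg D)
  have hcd : |D| * c ≤ F / 2 := by
    rw [hc_def, mul_div_assoc', div_le_div_iff₀ (by positivity) (by norm_num)]
    nlinarith [abs_nonneg D, hF.le]
  have : |D| * (c * (N:ℝ)) ≤ (F/2) * (N:ℝ) := by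
    rw [← mul_assoc]; exact mul_le_mul_of_nonneg_right hcd hN0
  linarith

/-- Entropy-type lower bound for `ρ^j * C(m,j)`. -/
lemma entropy_choose_lb (ρ : ℝ) (hρ0 : 0 < ρ) (m j : ℕ) (hj0 : 0 < j) (hjm : j < m) :
    Real.exp ((m:ℝ) * ((j:ℝ)/(m:ℝ) * Real.log ρ + Real.negMulLog ((j:ℝ)/(m:ℝ)) +
        Real.negMulLog (1 - (j:ℝ)/(m:ℝ))))
      ≤ ((m:ℝ) + 1) * (ρ ^ j * (m.choose j : ℝ)) := by
  have hmp : (0:ℝ) < m := by exact_mod_cast lt_trans hj0 hjm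
  have hjp : (0:ℝ) < j := by exact_mod_cast hj0
  have hmjn : 0 < m - j := by omega
  have hmjp : (0:ℝ) < ((m - j : ℕ) : ℝ) := by exact_mod_cast hmjn
  have hcast : ((m - j : ℕ) : ℝ) = (m:ℝ) - j := by
    push_cast [Nat.cast_sub hjm.le]; ring
  have hlx : Real.log ((j:ℝ)/m) = Real.log j - Real.log m :=
    Real.log_div (ne_of_gt hjp) (ne_of_gt hmp)
  have h1x : 1 - (j:ℝ)/m = ((m - j : ℕ) : ℝ)/m := by
    rw [hcast]; field_simp
  have hl1x : Real.log (1 - (j:ℝ)/m) = Real.log ((m - j : ℕ) : ℝ) - Real.log m := by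
    rw [h1x, Real.log_div (ne_of_gt hmjp) (ne_of_gt hmp)]
  have hgid : (m:ℝ) * ((j:ℝ)/(m:ℝ) * Real.log ρ + Real.negMulLog ((j:ℝ)/(m:ℝ)) +
      Real.negMulLog (1 - (j:ℝ)/(m:ℝ))) =
      (j:ℝ) * Real.log ρ + (m:ℝ) * Real.log m - (j:ℝ) * Real.log j -
        ((m - j : ℕ) : ℝ) * Real.log ((m - j : ℕ) : ℝ) := by
    simp only [Real.negMulLog]
    rw [hlx, hl1x, h1x, hcast]
    field_simp
    ring
  have hpos : (0:ℝ) < ρ ^ j * (m:ℝ) ^ m / ((j:ℝ) ^ j * ((m - j : ℕ) : ℝ) ^ (m - j)) :=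
    div_pos (mul_pos (pow_pos hρ0 j) (pow_pos hmp m))
      (mul_pos (pow_pos hjp j) (pow_pos hmjp (m - j)))
  have hexp : Real.exp ((m:ℝ) * ((j:ℝ)/(m:ℝ) * Real.log ρ + Real.negMulLog ((j:ℝ)/(m:ℝ)) +
      Real.negMulLog (1 - (j:ℝ)/(m:ℝ)))) =
      ρ ^ j * (m:ℝ) ^ m / ((j:ℝ) ^ j * ((m - j : ℕ) : ℝ) ^ (m - j)) := by
    rw [hgid, ← Real.exp_log hpos]
    congr 1
    rw [Real.log_div (ne_of_gt (mul_pos (pow_pos hρ0 j) (pow_pos hmp m)))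
        (ne_of_gt (mul_pos (pow_pos hjp j) (pow_pos hmjp (m - j)))),
      Real.log_mul (ne_of_gt (pow_pos hρ0 j)) (ne_of_gt (pow_pos hmp m)),
      Real.log_mul (ne_of_gt (pow_pos hjp j)) (ne_of_gt (pow_pos hmjp (m - j))),
      Real.log_pow, Real.log_pow, Real.log_pow, Real.log_pow]
    push_cast
    ring
  have hnat := nat_entropy_bound m j hjm.le
  have hnatR : (m:ℝ) ^ m ≤ ((m:ℝ) + 1) * ((m.choose j : ℝ) * (j:ℝ) ^ j *
      ((m - j : ℕ) : ℝ) ^ (m - j)) := by exact_mod_cast hnat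
  rw [hexp, div_le_iff₀ (mul_pos (pow_pos hjp j) (pow_pos hmjp (m - j)))]
  calc ρ ^ j * (m:ℝ) ^ m
      ≤ ρ ^ j * (((m:ℝ) + 1) * ((m.choose j : ℝ) * (j:ℝ) ^ j * ((m - j : ℕ) : ℝ) ^ (m - j))) :=
        mul_le_mul_of_nonneg_left hnatR (pow_nonneg hρ0.le j)
    _ = ((m:ℝ) + 1) * (ρ ^ j * (m.choose j : ℝ)) * ((j:ℝ) ^ j * ((m - j : ℕ) : ℝ) ^ (m - j)) := by
        ring

set_option maxHeartbeats 1000000 in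
theorem tail_prob_lower_bound (ρ α C₂ : ℝ) (hρ0 : 0 < ρ) (hρ1 : ρ < 1)
    (hα : α ∈ Set.Ioo (0 : ℝ) 1)
    (hsol : α ^ α * (1 - α) ^ (1 - α) = ρ ^ α)
    (huniq : ∀ x ∈ Set.Ioo (0 : ℝ) 1, x ^ x * (1 - x) ^ (1 - x) = ρ ^ x → x = α)
    (hC₂ : C₂ = 3 / (Real.log α - Real.log ρ)) :
    ∀ᶠ N : ℕ in atTop,
      tailP ρ N (⌊α * ((N : ℝ) - 1)⌋₊ - ⌊C₂ * Real.log N⌋₊) ≥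
        1 - (3 + ρ) / (((N : ℝ) - 1) * ρ ^ 2) := by
  obtain ⟨hα0, hα1⟩ := hα
  have h1α : (0:ℝ) < 1 - α := by linarith
  -- basic log facts
  have halog : α * Real.log α + (1 - α) * Real.log (1 - α) = α * Real.log ρ := by
    have h := congrArg Real.log hsol
    rw [Real.log_mul (by positivity) (by positivity), Real.log_rpow hα0,
      Real.log_rpow h1α, Real.log_rpow hρ0] at h
    linarith [h]
  have hlog1α : Real.log (1 - α) < 0 := Real.log_neg h1α (by linarith)
  have hL : 0 < Real.log α - Real.log ρ := by
    have : α * (Real.log α - Real.log ρ) = -((1 - α) * Real.log (1 - α)) := by linarith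
    nlinarith [mul_pos h1α (neg_pos.mpr hlog1α)]
  set L := Real.log α - Real.log ρ with hL_def
  have hC₂pos : 0 < C₂ := by rw [hC₂]; positivity
  have hLC : L * C₂ = 3 := by rw [hC₂]; field_simp
  -- the entropy function g
  set g : ℝ → ℝ := fun x => x * Real.log ρ + Real.negMulLog x + Real.negMulLog (1 - x)
    with hg_def
  have hgα : g α = 0 := by
    simp only [hg_def, Real.negMulLog]
    linarith
  have hconc : ConcaveOn ℝ (Set.Icc (0:ℝ) 1) g := by
    have c1 : ConcaveOn ℝ (Set.Icc (0:ℝ) 1) Real.negMulLog :=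
      Real.concaveOn_negMulLog.subset (fun x hx => hx.1) (convex_Icc 0 1)
    have c2 : ConcaveOn ℝ (Set.Icc (0:ℝ) 1) (fun x => Real.negMulLog (1 - x)) := by
      refine ⟨convex_Icc _ _, fun x hx y hy a b ha hb hab => ?_⟩
      have hx' : (1 - x) ∈ Set.Ici (0:ℝ) := by simp [hx.2]
      have hy' : (1 - y) ∈ Set.Ici (0:ℝ) := by simp [hy.2]
      have h := Real.concaveOn_negMulLog.2 hx' hy' ha hb hab
      simp only [smul_eq_mul] at h ⊢
      have : 1 - (a * x + b * y) = a * (1 - x) + b * (1 - y) := by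
        rw [mul_sub, mul_sub]; linarith
      rw [this]; exact h
    have c3 : ConcaveOn ℝ (Set.Icc (0:ℝ) 1) (fun x : ℝ => x * Real.log ρ) := by
      refine ⟨convex_Icc _ _, fun x hx y hy a b ha hb hab => le_of_eq ?_⟩
      simp only [smul_eq_mul]; ring
    exact (c3.add c1).add c2
  have hgd : HasDerivAt g (Real.log ρ - Real.log α + Real.log (1 - α)) α := by
    have h1 : HasDerivAt (fun x : ℝ => x * Real.log ρ) (Real.log ρ) α := by
      simpa using (hasDerivAt_id α).mul_const (Real.log ρ)
    have h2 : HasDerivAt Real.negMulLog (-Real.log α - 1) α :=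
      Real.hasDerivAt_negMulLog (ne_of_gt hα0)
    have hinner : HasDerivAt (fun x : ℝ => 1 - x) (-1) α := by
      simpa using (hasDerivAt_id α).const_sub 1
    have h3 : HasDerivAt (fun x : ℝ => Real.negMulLog (1 - x))
        ((-Real.log (1 - α) - 1) * (-1)) α :=
      (Real.hasDerivAt_negMulLog (ne_of_gt h1α)).comp α hinner
    have := (h1.add h2).add h3
    refine this.congr_deriv ?_
    ring
  -- pick the chord base point
  set c₂ : ℝ := -Real.log (1 - α) / 2 with hc2_def
  have hc2 : 0 < c₂ := by rw [hc2_def]; linarith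
  have hslope : Tendsto (slope g α) (𝓝[<] α)
      (𝓝 (Real.log ρ - Real.log α + Real.log (1 - α))) := by
    refine (hasDerivAt_iff_tendsto_slope.mp hgd).mono_left (nhdsWithin_mono α ?_)
    intro z hz
    exact ne_of_lt hz
  have hev1 : ∀ᶠ z in 𝓝[<] α, slope g α z <
      (Real.log ρ - Real.log α + Real.log (1 - α)) + c₂ :=
    hslope.eventually (eventually_lt_nhds (by linarith))
  have hev2 : ∀ᶠ z in 𝓝[<] α, z ∈ Set.Ioo (α / 2) α :=
    Ioo_mem_nhdsLT_of_mem ⟨by linarith, le_rfl⟩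
  obtain ⟨y, hy1, hy2⟩ := (hev1.and hev2).exists
  have hy0 : 0 < y := lt_trans (by linarith) hy2.1
  have hyα : y < α := hy2.2
  set δ₀ : ℝ := α - y with hδ₀_def
  have hδ₀ : 0 < δ₀ := by rw [hδ₀_def]; linarith
  have hgy : (L + c₂) * δ₀ ≤ g y := by
    have hs : slope g α y = g y / (y - α) := by
      simp [slope_def_field, hgα]
    rw [hs] at hy1
    have hyα' : y - α < 0 := by linarith
    rw [div_lt_iff_of_neg hyα'] at hy1
    have : Real.log ρ - Real.log α + Real.log (1 - α) + c₂ = -(L + c₂) := by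
      rw [hL_def, hc2_def]; ring
    nlinarith [hy1]
  have hchord : ∀ x : ℝ, y ≤ x → x ≤ α → (L + c₂) * (α - x) ≤ g x := by
    intro x hxy hxα
    set a : ℝ := (α - x) / δ₀ with ha_def
    set b : ℝ := (x - y) / δ₀ with hb_def
    have ha : 0 ≤ a := div_nonneg (by linarith) hδ₀.le
    have hb : 0 ≤ b := div_nonneg (by linarith) hδ₀.le
    have hab : a + b = 1 := by
      rw [ha_def, hb_def, ← add_div, hδ₀_def]
      rw [div_eq_one_iff_eq (by linarith)]; ring
    have hyI : y ∈ Set.Icc (0:ℝ) 1 := ⟨hy0.le, by linarith⟩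
    have hαI : α ∈ Set.Icc (0:ℝ) 1 := ⟨hα0.le, hα1.le⟩
    have hcomb := hconc.2 hyI hαI ha hb hab
    simp only [smul_eq_mul] at hcomb
    have hxe : a * y + b * α = x := by
      rw [ha_def, hb_def]
      field_simp
      ring
    rw [hxe, hgα, mul_zero, add_zero] at hcomb
    calc (L + c₂) * (α - x) = a * ((L + c₂) * δ₀) := by
          rw [ha_def]; field_simp
      _ ≤ a * g y := mul_le_mul_of_nonneg_left hgy ha
      _ ≤ g x := hcomb
  -- eventual conditions
  have hE4ev : ∀ᶠ N : ℕ in atTop, Real.log (2 * ρ ^ 2) ≤ c₂ * C₂ * Real.log N := by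
    have h := (Real.tendsto_log_atTop.comp tendsto_natCast_atTop_atTop).eventually_ge_atTop
      (Real.log (2 * ρ ^ 2) / (c₂ * C₂))
    filter_upwards [h] with N hN
    simp only [Function.comp] at hN
    rw [div_le_iff₀ (by positivity)] at hN
    linarith
  filter_upwards [eventually_ge_atTop 6, poly_beats_log C₂ 4 α hα0,
    poly_beats_log C₂ 2 δ₀ hδ₀, hE4ev] with N hN6 hE2 hE3 hE4
  -- notation
  set m : ℕ := N - 1 with hm_def
  have hm5 : 5 ≤ m := by omega
  have hmR : ((m : ℕ) : ℝ) = (N : ℝ) - 1 := by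
    rw [hm_def]
    have : (1:ℕ) ≤ N := by omega
    push_cast [Nat.cast_sub this]
    ring
  have hmpos : (0:ℝ) < m := by
    have : (0:ℕ) < m := by omega
    exact_mod_cast this
  have hm5R : (5:ℝ) ≤ m := by exact_mod_cast hm5
  have hlogN0 : 0 ≤ Real.log N := Real.log_nonneg (by exact_mod_cast (by omega : 1 ≤ N))
  set K : ℕ := ⌊C₂ * Real.log N⌋₊ with hK_def
  set fl : ℕ := ⌊α * ((N : ℝ) - 1)⌋₊ with hfl_def
  have hN1R : (0:ℝ) ≤ (N:ℝ) - 1 := by rw [← hmR]; exact hmpos.le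
  have hKle : (K:ℝ) ≤ C₂ * Real.log N := Nat.floor_le (mul_nonneg hC₂pos.le hlogN0)
  have hKgt : C₂ * Real.log N < (K:ℝ) + 1 := Nat.lt_floor_add_one _
  have hflle : (fl:ℝ) ≤ α * ((N : ℝ) - 1) := Nat.floor_le (mul_nonneg hα0.le hN1R)
  have hflgt : α * ((N : ℝ) - 1) < (fl:ℝ) + 1 := Nat.lt_floor_add_one _
  have hKfl : K + 4 ≤ fl := by
    have h' : (K:ℝ) + 4 < (fl:ℝ) + 1 := by linarith
    have h'' : K + 4 < fl + 1 := by exact_mod_cast h'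
    omega
  set kk : ℕ := fl - K with hkk_def
  have hk4 : 4 ≤ kk := by omega
  set j : ℕ := kk - 1 with hj_def
  have hj3 : 3 ≤ j := by omega
  have hNgt : (0:ℝ) < (N:ℝ) - 1 := by rw [← hmR]; exact hmpos
  have hflm : fl ≤ m := by
    have h'' : α * ((N:ℝ) - 1) < 1 * ((N:ℝ) - 1) := mul_lt_mul_of_pos_right hα1 hNgt
    have h' : (fl:ℝ) < (m:ℝ) := by rw [hmR]; linarith
    have : fl < m := by exact_mod_cast h'
    omega
  have hkm : kk ≤ m := le_trans (Nat.sub_le _ _) hflm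
  have hjm : j < m := by omega
  have hjR : (j:ℝ) = (fl:ℝ) - K - 1 := by
    have h : j + K + 1 = fl := by omega
    have := congrArg (Nat.cast : ℕ → ℝ) h
    push_cast at this
    linarith
  -- the point x
  set x : ℝ := (j:ℝ) / m with hx_def
  have hαmj_lb : C₂ * Real.log N ≤ α * (m:ℝ) - j := by
    rw [hmR]; linarith
  have hαmj_ub : α * (m:ℝ) - j ≤ δ₀ * (m:ℝ) := by
    rw [hmR]; linarith
  have hmx : (m:ℝ) * (α - x) = α * (m:ℝ) - j := by
    rw [hx_def]; field_simp
  have hxα : x ≤ α := by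
    have h4 : 0 ≤ (m:ℝ) * (α - x) := by
      rw [hmx]; linarith [mul_nonneg hC₂pos.le hlogN0]
    have := (mul_nonneg_iff_of_pos_left hmpos).mp h4
    linarith
  have hxy : y ≤ x := by
    have h1 : (m:ℝ) * (α - x) ≤ (m:ℝ) * δ₀ := by rw [hmx]; linarith [hαmj_ub]
    have h2 : α - x ≤ δ₀ := le_of_mul_le_mul_left h1 hmpos
    rw [hδ₀_def] at h2; linarith
  -- lower bound on m * g x
  have hmgx : 3 * Real.log N + Real.log (2 * ρ ^ 2) ≤ (m:ℝ) * g x := by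
    have hch := hchord x hxy hxα
    have h1 : (L + c₂) * (C₂ * Real.log N) ≤ (L + c₂) * ((m:ℝ) * (α - x)) := by
      apply mul_le_mul_of_nonneg_left _ (by linarith : (0:ℝ) ≤ L + c₂)
      rw [hmx]; exact hαmj_lb
    have h2 : (m:ℝ) * ((L + c₂) * (α - x)) ≤ (m:ℝ) * g x :=
      mul_le_mul_of_nonneg_left hch hmpos.le
    have h3 : (L + c₂) * (C₂ * Real.log N) = 3 * Real.log N + c₂ * C₂ * Real.log N := by
      linear_combination Real.log (N:ℝ) * hLC
    have h1' : (L + c₂) * ((m:ℝ) * (α - x)) = (m:ℝ) * ((L + c₂) * (α - x)) := by ring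
    linarith [h1, h2, h3, hE4]
  -- entropy bound gives a lower bound on ρ^j * C(m,j)
  have hfj : 2 * ρ ^ 2 * (m:ℝ) ^ 2 ≤ ρ ^ j * (m.choose j : ℝ) := by
    have hent := entropy_choose_lb ρ hρ0 m j (by omega) hjm
    have hgx_eq : (m:ℝ) * g x = (m:ℝ) * ((j:ℝ)/(m:ℝ) * Real.log ρ +
        Real.negMulLog ((j:ℝ)/(m:ℝ)) + Real.negMulLog (1 - (j:ℝ)/(m:ℝ))) := by
      rw [hg_def, hx_def]
    have hNR : (m:ℝ) + 1 = (N:ℝ) := by rw [hmR]; ring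
    have hexp_lb : 2 * ρ ^ 2 * (N:ℝ) ^ 3 ≤ Real.exp ((m:ℝ) * g x) := by
      have hNpos : (0:ℝ) < N := by positivity
      have h' : Real.exp (3 * Real.log N + Real.log (2 * ρ ^ 2)) ≤ Real.exp ((m:ℝ) * g x) :=
        Real.exp_le_exp.mpr hmgx
      have h'' : Real.exp (3 * Real.log N + Real.log (2 * ρ ^ 2)) = (N:ℝ) ^ 3 * (2 * ρ ^ 2) := by
        rw [Real.exp_add, show (3:ℝ) * Real.log N = Real.log N + Real.log N + Real.log N by ring,
          Real.exp_add, Real.exp_add, Real.exp_log hNpos, Real.exp_log (by positivity)]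
        ring
      rw [h''] at h'
      linarith
    rw [hgx_eq] at hexp_lb
    have hcomb := le_trans hexp_lb hent
    rw [hNR] at hcomb
    have hmN : (m:ℝ) ≤ (N:ℝ) := by rw [hmR]; linarith
    have hNpos : (0:ℝ) < N := by positivity
    have h1 : (N:ℝ) * (2 * ρ ^ 2 * (m:ℝ) ^ 2) ≤ (N:ℝ) * (ρ ^ j * (m.choose j : ℝ)) := by
      calc (N:ℝ) * (2 * ρ ^ 2 * (m:ℝ) ^ 2) ≤ (N:ℝ) * (2 * ρ ^ 2 * (N:ℝ) ^ 2) := by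
            apply mul_le_mul_of_nonneg_left _ hNpos.le
            apply mul_le_mul_of_nonneg_left _ (by positivity : (0:ℝ) ≤ 2 * ρ ^ 2)
            exact pow_le_pow_left₀ hmpos.le hmN 2
        _ = 2 * ρ ^ 2 * (N:ℝ) ^ 3 := by ring
        _ ≤ (N:ℝ) * (ρ ^ j * (m.choose j : ℝ)) := hcomb
    exact le_of_mul_le_mul_left h1 hNpos
  -- bound on rfun at j
  have hchoosejpos : (0:ℝ) < (m.choose j : ℝ) := by
    exact_mod_cast Nat.choose_pos hjm.le
  have hrj : rfun ρ N j ≤ (2 * ρ ^ 2 * (m:ℝ) ^ 2)⁻¹ := by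
    rw [rfun, show N - 1 = m from rfl]
    exact inv_anti₀ (mul_pos (mul_pos two_pos (pow_pos hρ0 2)) (pow_pos hmpos 2)) hfj
  -- step monotonicity of rfun
  have hFrec : ∀ l : ℕ, l < m → (ρ ^ (l+1) * (m.choose (l+1) : ℝ)) * ((l:ℝ) + 1)
      = (ρ ^ l * (m.choose l : ℝ)) * (ρ * ((m:ℝ) - l)) := by
    intro l hl
    have h := congrArg (Nat.cast : ℕ → ℝ) (Nat.choose_succ_right_eq m l)
    push_cast [Nat.cast_sub hl.le] at h
    rw [pow_succ]
    linear_combination (ρ ^ l * ρ) * h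
  have hFpos : ∀ l : ℕ, l ≤ m → (0:ℝ) < ρ ^ l * (m.choose l : ℝ) := by
    intro l hl
    have : (0:ℝ) < (m.choose l : ℝ) := by exact_mod_cast Nat.choose_pos hl
    exact mul_pos (pow_pos hρ0 l) this
  have hstep_down : ∀ l : ℕ, l + 1 ≤ m → ((l:ℝ) + 1) ≤ ρ * ((m:ℝ) - l) →
      rfun ρ N (l+1) ≤ rfun ρ N l := by
    intro l hl hcond
    have hF1 := hFpos l (by omega)
    have hF2 := hFpos (l+1) hl
    have hle : ρ ^ l * (m.choose l : ℝ) ≤ ρ ^ (l+1) * (m.choose (l+1) : ℝ) := by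
      have h1 : (ρ ^ l * (m.choose l : ℝ)) * ((l:ℝ) + 1)
          ≤ (ρ ^ l * (m.choose l : ℝ)) * (ρ * ((m:ℝ) - l)) :=
        mul_le_mul_of_nonneg_left hcond hF1.le
      rw [← hFrec l (by omega)] at h1
      exact le_of_mul_le_mul_right h1 (by positivity)
    rw [rfun, rfun, show N - 1 = m from rfl]
    exact inv_anti₀ hF1 hle
  have hstep_up : ∀ l : ℕ, l + 1 ≤ m → ρ * ((m:ℝ) - l) ≤ ((l:ℝ) + 1) →
      rfun ρ N l ≤ rfun ρ N (l+1) := by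
    intro l hl hcond
    have hF1 := hFpos l (by omega)
    have hF2 := hFpos (l+1) hl
    have hle : ρ ^ (l+1) * (m.choose (l+1) : ℝ) ≤ ρ ^ l * (m.choose l : ℝ) := by
      have h1 : (ρ ^ l * (m.choose l : ℝ)) * (ρ * ((m:ℝ) - l))
          ≤ (ρ ^ l * (m.choose l : ℝ)) * ((l:ℝ) + 1) :=
        mul_le_mul_of_nonneg_left hcond hF1.le
      rw [← hFrec l (by omega)] at h1
      exact le_of_mul_le_mul_right h1 (by positivity)
    rw [rfun, rfun, show N - 1 = m from rfl]
    exact inv_anti₀ hF2 hle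
  have hrnonneg : ∀ i : ℕ, 0 ≤ rfun ρ N i := by
    intro i
    rw [rfun]
    exact inv_nonneg.mpr (mul_nonneg (pow_nonneg hρ0.le i) (Nat.cast_nonneg _))
  -- valley bound
  have hvalley : ∀ i : ℕ, 2 ≤ i → i ≤ j → rfun ρ N i ≤ rfun ρ N 2 + rfun ρ N j := by
    intro i h2i hij
    by_cases hall : ∀ l : ℕ, 2 ≤ l → l < i → ((l:ℝ) + 1) ≤ ρ * ((m:ℝ) - l)
    · have h := chain_ge_aux (rfun ρ N) i 2 h2i
        (fun l hl hli => hstep_down l (by omega) (hall l hl hli))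
      linarith [hrnonneg j]
    · push_neg at hall
      obtain ⟨l₀, hl₀2, hl₀i, hl₀⟩ := hall
      have h := chain_le_aux (rfun ρ N) j i hij
        (fun l hl hlj => by
          apply hstep_up l (by omega)
          have hml : (m:ℝ) - l ≤ (m:ℝ) - l₀ := by
            have : (l₀:ℝ) ≤ l := by exact_mod_cast le_trans hl₀i.le hl
            linarith
          have h2 : ρ * ((m:ℝ) - l) ≤ ρ * ((m:ℝ) - l₀) :=
            mul_le_mul_of_nonneg_left hml hρ0.le
          have h3 : (l₀:ℝ) + 1 ≤ (l:ℝ) + 1 := by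
            have : (l₀:ℝ) ≤ l := by exact_mod_cast le_trans hl₀i.le hl
            linarith
          linarith)
      linarith [hrnonneg 2]
  -- explicit values
  have hr0 : rfun ρ N 0 = 1 := by simp [rfun]
  have hr1 : rfun ρ N 1 = (ρ * (m:ℝ))⁻¹ := by
    rw [rfun, show N - 1 = m from rfl]
    simp [Nat.choose_one_right]
  have hr2val : rfun ρ N 2 = (ρ ^ 2 * ((m:ℝ) * ((m:ℝ) - 1) / 2))⁻¹ := by
    rw [rfun, show N - 1 = m from rfl, Nat.cast_choose_two]
  -- sum splitting
  have hS_split : ∑ i ∈ Finset.range kk, rfun ρ N i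
      = rfun ρ N 0 + rfun ρ N 1 + ∑ i ∈ Finset.Ico 2 kk, rfun ρ N i := by
    rw [Finset.range_eq_Ico,
      ← Finset.sum_Ico_consecutive _ (by omega : (0:ℕ) ≤ 2) (by omega : 2 ≤ kk)]
    congr 1
    rw [Finset.sum_Ico_eq_sum_range]
    simp [Finset.sum_range_succ]
  have hmid : ∑ i ∈ Finset.Ico 2 kk, rfun ρ N i
      ≤ ((kk - 2 : ℕ) : ℝ) * (rfun ρ N 2 + rfun ρ N j) := by
    calc ∑ i ∈ Finset.Ico 2 kk, rfun ρ N i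
        ≤ ∑ _i ∈ Finset.Ico 2 kk, (rfun ρ N 2 + rfun ρ N j) := by
          apply Finset.sum_le_sum
          intro i hi
          rw [Finset.mem_Ico] at hi
          exact hvalley i hi.1 (by omega)
      _ = ((kk - 2 : ℕ) : ℝ) * (rfun ρ N 2 + rfun ρ N j) := by
          rw [Finset.sum_const, Nat.card_Ico, nsmul_eq_mul]
  -- numeric bounds
  have hden : (0:ℝ) < (m:ℝ) * ρ ^ 2 := mul_pos hmpos (pow_pos hρ0 2)
  have hkk2m : ((kk - 2 : ℕ) : ℝ) ≤ (m:ℝ) := by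
    exact_mod_cast (by omega : kk - 2 ≤ m)
  have ht1 : rfun ρ N 1 = ρ / ((m:ℝ) * ρ ^ 2) := by
    rw [hr1]; field_simp
  have ht2 : ((kk - 2 : ℕ) : ℝ) * rfun ρ N 2 ≤ (5/2) / ((m:ℝ) * ρ ^ 2) := by
    rw [hr2val]
    have hA : (0:ℝ) < ρ ^ 2 * ((m:ℝ) * ((m:ℝ) - 1) / 2) :=
      mul_pos (pow_pos hρ0 2)
        (div_pos (mul_pos hmpos (by linarith : (0:ℝ) < (m:ℝ) - 1)) two_pos)
    calc ((kk - 2 : ℕ) : ℝ) * (ρ ^ 2 * ((m:ℝ) * ((m:ℝ) - 1) / 2))⁻¹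
        ≤ (m:ℝ) * (ρ ^ 2 * ((m:ℝ) * ((m:ℝ) - 1) / 2))⁻¹ :=
          mul_le_mul_of_nonneg_right hkk2m (inv_nonneg.mpr hA.le)
      _ ≤ (5/2) / ((m:ℝ) * ρ ^ 2) := by
          rw [← div_eq_mul_inv, div_le_div_iff₀ hA hden]
          have hq : (m:ℝ) * ((m:ℝ) * 1) ≤ (m:ℝ) * ((m:ℝ) - 1) * (5/4) := by
            have h5 : (m:ℝ) * 1 ≤ ((m:ℝ) - 1) * (5/4) := by linarith
            calc (m:ℝ) * ((m:ℝ) * 1) ≤ (m:ℝ) * (((m:ℝ) - 1) * (5/4)) :=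
                  mul_le_mul_of_nonneg_left h5 hmpos.le
              _ = (m:ℝ) * ((m:ℝ) - 1) * (5/4) := by ring
          calc (m:ℝ) * ((m:ℝ) * ρ ^ 2) = (m:ℝ) * ((m:ℝ) * 1) * ρ ^ 2 := by ring
            _ ≤ (m:ℝ) * ((m:ℝ) - 1) * (5/4) * ρ ^ 2 :=
                mul_le_mul_of_nonneg_right hq (pow_nonneg hρ0.le 2)
            _ = 5/2 * (ρ ^ 2 * ((m:ℝ) * ((m:ℝ) - 1) / 2)) := by ring
  have ht3 : ((kk - 2 : ℕ) : ℝ) * rfun ρ N j ≤ (1/2) / ((m:ℝ) * ρ ^ 2) := by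
    calc ((kk - 2 : ℕ) : ℝ) * rfun ρ N j ≤ (m:ℝ) * (2 * ρ ^ 2 * (m:ℝ) ^ 2)⁻¹ :=
          mul_le_mul hkk2m hrj (hrnonneg j) hmpos.le
      _ ≤ (1/2) / ((m:ℝ) * ρ ^ 2) := by
          rw [← div_eq_mul_inv,
            div_le_div_iff₀ (mul_pos (mul_pos two_pos (pow_pos hρ0 2)) (pow_pos hmpos 2)) hden]
          exact le_of_eq (by ring)
  have hsum_terms : ρ / ((m:ℝ) * ρ ^ 2) + (5/2) / ((m:ℝ) * ρ ^ 2) + (1/2) / ((m:ℝ) * ρ ^ 2)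
      = (3 + ρ) / ((m:ℝ) * ρ ^ 2) := by
    rw [← add_div, ← add_div]
    ring_nf
  have hsplit : (∑ i ∈ Finset.range kk, rfun ρ N i)
      = 1 + rfun ρ N 1 + ∑ i ∈ Finset.Ico 2 kk, rfun ρ N i := by
    rw [hS_split, hr0]
  have hS_le : (∑ i ∈ Finset.range kk, rfun ρ N i) ≤ 1 + (3 + ρ) / ((m:ℝ) * ρ ^ 2) := by
    have h := hmid
    rw [hsplit, ht1]
    have : ((kk - 2 : ℕ) : ℝ) * (rfun ρ N 2 + rfun ρ N j)
        ≤ (5/2) / ((m:ℝ) * ρ ^ 2) + (1/2) / ((m:ℝ) * ρ ^ 2) := by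
      rw [mul_add]; linarith [ht2, ht3]
    linarith [hsum_terms, le_trans h this]
  have hS_ge1 : 1 ≤ ∑ i ∈ Finset.range kk, rfun ρ N i := by
    have hmid_nonneg : 0 ≤ ∑ i ∈ Finset.Ico 2 kk, rfun ρ N i :=
      Finset.sum_nonneg fun i _ => hrnonneg i
    rw [hsplit]
    linarith [hrnonneg 1]
  -- finish
  have hkN : kk ≤ N := by omega
  rw [tailP, if_pos hkN, ge_iff_le, show ((N:ℝ) - 1) = (m:ℝ) from hmR.symm]
  set S : ℝ := ∑ i ∈ Finset.range kk, rfun ρ N i with hS_def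
  have hS_pos : 0 < S := lt_of_lt_of_le one_pos hS_ge1
  have hinv : 2 - S ≤ S⁻¹ := by
    rw [← sub_nonneg]
    have h : S⁻¹ - (2 - S) = (S - 1) ^ 2 / S := by
      field_simp
      ring
    rw [h]
    exact div_nonneg (sq_nonneg _) hS_pos.le
  linarith
end

section
/- Let 0 < ρ < 1, let α ∈ (0,1) be the unique solution of x^x (1−x)^{1−x} = ρ^x, and set h_N = ⌊α(N−1)⌋. Then for all sufficiently large N and every integer k with 1 ≤ k ≤ N − h_N, one has ∑_{i=0}^{h_N+k−1} r_{ρ,N}(i) ≥ k · r_{ρ,N}(h_N), and consequently P(H_N ≥ h_N + k) ≤ 1/(k · r_{ρ,N}(h_N)). -/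
open Finset Filter Real Topology

set_option maxHeartbeats 1000000 in
theorem tail_prob_upper_bound (ρ α : ℝ) (hρ0 : 0 < ρ) (hρ1 : ρ < 1)
    (hα : α ∈ Set.Ioo (0 : ℝ) 1)
    (hsol : α ^ α * (1 - α) ^ (1 - α) = ρ ^ α)
    (huniq : ∀ x ∈ Set.Ioo (0 : ℝ) 1, x ^ x * (1 - x) ^ (1 - x) = ρ ^ x → x = α) :
    ∀ᶠ N : ℕ in atTop, ∀ k : ℕ, 1 ≤ k → k ≤ N - ⌊α * ((N : ℝ) - 1)⌋₊ →
      (∑ i ∈ Finset.range (⌊α * ((N : ℝ) - 1)⌋₊ + k), rfun ρ N i ≥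
          (k : ℝ) * rfun ρ N ⌊α * ((N : ℝ) - 1)⌋₊) ∧
      tailP ρ N (⌊α * ((N : ℝ) - 1)⌋₊ + k) ≤
        1 / ((k : ℝ) * rfun ρ N ⌊α * ((N : ℝ) - 1)⌋₊) := by
  obtain ⟨hα0, hα1⟩ := hα
  -- ρ < α
  have hρα : ρ < α := by
    by_contra hle
    push_neg at hle
    have h1 : (1 - α) ^ (1 - α) < 1 :=
      Real.rpow_lt_one (by linarith) (by linarith) (by linarith)
    have h2 : α ^ α ≤ ρ ^ α := Real.rpow_le_rpow (le_of_lt hα0) hle (le_of_lt hα0)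
    have hpos : (0:ℝ) < α ^ α := Real.rpow_pos_of_pos hα0 α
    nlinarith [hsol]
  set c : ℝ := α * (1 + ρ) - ρ with hc_def
  have hc : 0 < c := by nlinarith
  rw [eventually_atTop]
  refine ⟨⌈ρ / c⌉₊ + 2, ?_⟩
  intro N hN k hk1 hk2
  have hN2 : 2 ≤ N := by omega
  have hNr : (1:ℝ) ≤ (N:ℝ) := by exact_mod_cast Nat.one_le_iff_ne_zero.mpr (by omega)
  set h : ℕ := ⌊α * ((N : ℝ) - 1)⌋₊ with hh_def
  have hNc : ρ ≤ c * ((N:ℝ) - 1) := by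
    have h1 : ρ / c ≤ (⌈ρ / c⌉₊ : ℝ) := Nat.le_ceil _
    have h2 : ((⌈ρ / c⌉₊ + 2 : ℕ) : ℝ) ≤ (N:ℝ) := by exact_mod_cast hN
    push_cast at h2
    have : ρ / c ≤ (N:ℝ) - 1 := by linarith
    calc ρ = c * (ρ / c) := by field_simp
    _ ≤ c * ((N:ℝ) - 1) := by nlinarith
  have hcastN1 : ((N - 1 : ℕ) : ℝ) = (N:ℝ) - 1 := by
    have : 1 ≤ N := by omega
    push_cast [this]; ring
  have hfloor_le : (h:ℝ) ≤ α * ((N:ℝ) - 1) := Nat.floor_le (by nlinarith)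
  have hfloor_gt : α * ((N:ℝ) - 1) < (h:ℝ) + 1 := Nat.lt_floor_add_one _
  have hh_le : h ≤ N - 1 := by
    have : (h:ℝ) ≤ ((N - 1 : ℕ) : ℝ) := by rw [hcastN1]; nlinarith
    exact_mod_cast this
  have hstep : ρ * ((N:ℝ) - 1) ≤ (1 + ρ) * (h:ℝ) + 1 := by nlinarith
  -- monotonicity of f j = ρ^j * C(N-1, j) on [h, N-1]
  have hmono : ∀ j, h ≤ j → j ≤ N - 1 →
      ρ ^ j * (Nat.choose (N - 1) j : ℝ) ≤ ρ ^ h * (Nat.choose (N - 1) h : ℝ) := by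
    intro j hj
    induction j, hj using Nat.le_induction with
    | base => intro _; exact le_refl _
    | succ j hj ih =>
      intro hj1
      have hjN : j ≤ N - 1 := by omega
      have ihj := ih hjN
      have hjcast : ((N - 1 - j : ℕ) : ℝ) = (N:ℝ) - 1 - (j:ℝ) := by
        have h1 : j ≤ N - 1 := hjN
        push_cast [Nat.cast_sub h1, hcastN1]; ring
      have hid : ((N - 1).choose (j+1) : ℝ) * ((j:ℝ)+1) =
          ((N - 1).choose j : ℝ) * (((N - 1 - j : ℕ)) : ℝ) := by
        exact_mod_cast congrArg (Nat.cast (R := ℝ)) (Nat.choose_succ_right_eq (N-1) j)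
      have hρbd : ρ * ((N:ℝ) - 1 - (j:ℝ)) ≤ (j:ℝ) + 1 := by
        have hhj : (h:ℝ) ≤ (j:ℝ) := by exact_mod_cast hj
        nlinarith
      have hCn : (0:ℝ) ≤ ((N - 1).choose j : ℝ) := by positivity
      have h1 : ρ * ((N - 1).choose (j+1) : ℝ) ≤ ((N - 1).choose j : ℝ) := by
        have hj1pos : (0:ℝ) < (j:ℝ) + 1 := by positivity
        rw [← mul_le_mul_iff_of_pos_right hj1pos]
        calc ρ * ((N - 1).choose (j+1) : ℝ) * ((j:ℝ)+1)
            = ρ * (((N - 1).choose (j+1) : ℝ) * ((j:ℝ)+1)) := by ring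
          _ = ρ * (((N - 1).choose j : ℝ) * (((N - 1 - j : ℕ)) : ℝ)) := by rw [hid]
          _ = ((N - 1).choose j : ℝ) * (ρ * ((N:ℝ) - 1 - (j:ℝ))) := by
              rw [hjcast]; ring
          _ ≤ ((N - 1).choose j : ℝ) * ((j:ℝ)+1) :=
              mul_le_mul_of_nonneg_left hρbd hCn
      calc ρ ^ (j+1) * ((N - 1).choose (j+1) : ℝ)
          = ρ ^ j * (ρ * ((N - 1).choose (j+1) : ℝ)) := by ring
        _ ≤ ρ ^ j * ((N - 1).choose j : ℝ) :=
            mul_le_mul_of_nonneg_left h1 (by positivity)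
        _ ≤ ρ ^ h * ((N - 1).choose h : ℝ) := ihj
  have hhk : h + k ≤ N := by omega
  have hrh_pos : 0 < ρ ^ h * (Nat.choose (N - 1) h : ℝ) := by
    have := Nat.choose_pos hh_le
    positivity
  have hrh : 0 < rfun ρ N h := by
    rw [rfun]; exact inv_pos.mpr hrh_pos
  have hterm : ∀ i ∈ Finset.Ico h (h + k), rfun ρ N h ≤ rfun ρ N i := by
    intro i hi
    rw [Finset.mem_Ico] at hi
    have hiN : i ≤ N - 1 := by omega
    have hfi_pos : 0 < ρ ^ i * (Nat.choose (N - 1) i : ℝ) := by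
      have := Nat.choose_pos hiN
      positivity
    rw [rfun, rfun]
    exact inv_anti₀ hfi_pos (hmono i hi.1 hiN)
  have hsum : (k : ℝ) * rfun ρ N h ≤ ∑ i ∈ Finset.range (h + k), rfun ρ N i := by
    have hsplit : ∑ i ∈ Finset.range (h + k), rfun ρ N i =
        ∑ i ∈ Finset.range h, rfun ρ N i + ∑ i ∈ Finset.Ico h (h + k), rfun ρ N i := by
      rw [Finset.range_eq_Ico, Finset.range_eq_Ico]
      exact (Finset.sum_Ico_consecutive _ (Nat.zero_le h) (Nat.le_add_right h k)).symm
    have h1 : (0:ℝ) ≤ ∑ i ∈ Finset.range h, rfun ρ N i := by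
      apply Finset.sum_nonneg
      intro i _
      rw [rfun]
      positivity
    have h2 : (k : ℝ) * rfun ρ N h ≤ ∑ i ∈ Finset.Ico h (h + k), rfun ρ N i := by
      calc (k : ℝ) * rfun ρ N h = ∑ _i ∈ Finset.Ico h (h + k), rfun ρ N h := by
            rw [Finset.sum_const, Nat.card_Ico, Nat.add_sub_cancel_left,
              nsmul_eq_mul]
        _ ≤ ∑ i ∈ Finset.Ico h (h + k), rfun ρ N i := Finset.sum_le_sum hterm
    linarith [hsplit ▸ add_le_add h1 h2]
  refine ⟨hsum, ?_⟩
  have hkr : 0 < (k:ℝ) * rfun ρ N h := by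
    have : (0:ℝ) < (k:ℝ) := by exact_mod_cast hk1
    positivity
  rw [tailP, if_pos hhk, one_div]
  exact inv_anti₀ hkr hsum
end
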